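/- arXiv:2008.03032 — 3 statements merged into one kernel-verified Lean document; each statement's English description precedes it below -/
import Mathlib

section
/- The bound r in the cycle-generation lemma is sharp: if G is a cycle of length r, then G equals the ball B_{r/2}(v) for any vertex v, and the unique cycle of G (which has length r) is not generated by cycles of length at most r - 1. -/
open SimpleGraph

universe u

namespace LocalSep

variable {V : Type u}

/-- The ball of radius `r/2` around `v`: vertices of distance at most `⌊r/2⌋` from `v`;
if `r` is even, edges joining two vertices of distance exactly `r/2` are removed. -/
def ballVerts (G : SimpleGraph V) (v : V) (r : ℕ) : Set V :=
  {u | G.Reachable v u ∧ G.dist v u ≤ r / 2}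

def ball (G : SimpleGraph V) (v : V) (r : ℕ) : G.Subgraph where
  verts := ballVerts G v r
  Adj u u' := G.Adj u u' ∧ u ∈ ballVerts G v r ∧ u' ∈ ballVerts G v r ∧
    (Even r → ¬(G.dist v u = r / 2 ∧ G.dist v u' = r / 2))
  adj_sub h := h.1
  edge_vert h := h.2.1
  symm := ⟨fun u u' h => ⟨h.1.symm, h.2.2.1, h.2.1, fun he hc => h.2.2.2 he ⟨hc.2, hc.1⟩⟩⟩

/-- `v` is an `r`-local cutvertex if the punctured ball `B_{r/2}(v) - v` is disconnected. -/
def IsLocalCutvertex (G : SimpleGraph V) (r : ℕ) (v : V) : Prop :=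
  ¬ ((ball G v r).deleteVerts {v}).coe.Connected

def HasShortCycle (G : SimpleGraph V) (r : ℕ) : Prop :=
  ∃ (u : V) (c : G.Walk u u), c.IsCycle ∧ c.length ≤ r

/-- A connected graph is `r`-locally 2-connected if it has no `r`-local cutvertex
and contains a cycle of length at most `r`. -/
def LocallyTwoConnected (G : SimpleGraph V) (r : ℕ) : Prop :=
  G.Connected ∧ (∀ v : V, ¬ IsLocalCutvertex G r v) ∧ HasShortCycle G r

/-- The core of `(a₁, a₂)`: all vertices on shortest `a₁`–`a₂` paths. -/
def core (G : SimpleGraph V) (a₁ a₂ : V) : Set V :=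
  {x | ∃ p : G.Walk a₁ a₂, p.IsPath ∧ p.length = G.dist a₁ a₂ ∧ x ∈ p.support}

/-- A walk is contained in a subgraph. -/
def WalkIn {G : SimpleGraph V} (B : G.Subgraph) {x y : V} (p : G.Walk x y) : Prop :=
  p.toSubgraph ≤ B

/-- The label of a vertex `u` in a ball `B`: the set of (supports of) shortest paths
from the core `C` to `u` contained in `B`. -/
def labelIn (G : SimpleGraph V) (B : G.Subgraph) (C : Set V) (u : V) : Set (List V) :=
  {l | ∃ c ∈ C, ∃ p : G.Walk c u, p.IsPath ∧ WalkIn B p ∧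
    (∀ c' ∈ C, ∀ q : G.Walk c' u, q.IsPath → WalkIn B q → p.length ≤ q.length) ∧
    l = p.support}

/-- A potential vertex of the explorer-neighbourhood: a vertex together with a label. -/
abbrev EVert (V : Type u) : Type u := V × Set (List V)

/-- `p` is the copy of the vertex `p.1` in the labelled ball around `a ∈ {a₁, a₂}`. -/
def inCopy (G : SimpleGraph V) (a₁ a₂ : V) (r : ℕ) (a : V) (p : EVert V) : Prop :=
  p.1 ∈ ballVerts G a r ∧ p.2 = labelIn G (ball G a r) (core G a₁ a₂) p.1

/-- Vertices of the explorer-neighbourhood `Expl(a₁,a₂)`. -/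
def explVerts (G : SimpleGraph V) (a₁ a₂ : V) (r : ℕ) : Set (EVert V) :=
  {p | inCopy G a₁ a₂ r a₁ p ∨ inCopy G a₁ a₂ r a₂ p}

/-- The explorer-neighbourhood `Expl(a₁,a₂)`: the union of the two labelled balls,
where two copies of a vertex are identified iff their labels agree. -/
def expl (G : SimpleGraph V) (a₁ a₂ : V) (r : ℕ) : SimpleGraph (EVert V) where
  Adj p q :=
    (inCopy G a₁ a₂ r a₁ p ∧ inCopy G a₁ a₂ r a₁ q ∧ (ball G a₁ r).Adj p.1 q.1) ∨
    (inCopy G a₁ a₂ r a₂ p ∧ inCopy G a₁ a₂ r a₂ q ∧ (ball G a₂ r).Adj p.1 q.1)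
  symm := by
    refine ⟨?_⟩
    intro p q h
    rcases h with ⟨h1, h2, h3⟩ | ⟨h1, h2, h3⟩
    · exact Or.inl ⟨h2, h1, h3.symm⟩
    · exact Or.inr ⟨h2, h1, h3.symm⟩
  loopless := by
    refine ⟨?_⟩
    intro p h
    rcases h with ⟨-, -, h⟩ | ⟨-, -, h⟩ <;> exact G.loopless.irrefl _ h.adj_sub

/-- Vertices of the punctured explorer-neighbourhood `Expl(a₁,a₂) - a₁ - a₂`. -/
def pexplVerts (G : SimpleGraph V) (a₁ a₂ : V) (r : ℕ) : Set (EVert V) :=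
  {p | p ∈ explVerts G a₁ a₂ r ∧ p.1 ≠ a₁ ∧ p.1 ≠ a₂}

/-- The punctured explorer-neighbourhood `Expl(a₁,a₂) - a₁ - a₂`. -/
def pexpl (G : SimpleGraph V) (a₁ a₂ : V) (r : ℕ) :
    SimpleGraph (pexplVerts G a₁ a₂ r) :=
  SimpleGraph.induce (pexplVerts G a₁ a₂ r) (expl G a₁ a₂ r)

/-- `{v,w}` is an `r`-local 2-separator: `v,w` have distance at most `r/2` and the
punctured explorer-neighbourhood is disconnected. -/
def IsLocalTwoSep (G : SimpleGraph V) (r : ℕ) (v w : V) : Prop :=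
  v ≠ w ∧ G.Reachable v w ∧ 2 * G.dist v w ≤ r ∧ ¬ (pexpl G v w r).Connected

/-- The pair `(p,q)` of vertices of `Expl(b₁,b₂)` crosses the local 2-separator `{b₁,b₂}`:
they lie in different components of the punctured explorer-neighbourhood and there is a cycle
of length at most `r` through them containing a copy of `b₁` or `b₂`. -/
def CrossesPair (G : SimpleGraph V) (r : ℕ) (b₁ b₂ : V) (p q : EVert V) : Prop :=
  ∃ (hp : p ∈ pexplVerts G b₁ b₂ r) (hq : q ∈ pexplVerts G b₁ b₂ r),
    ¬ (pexpl G b₁ b₂ r).Reachable ⟨p, hp⟩ ⟨q, hq⟩ ∧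
    ∃ (u : EVert V) (c : (expl G b₁ b₂ r).Walk u u), c.IsCycle ∧ c.length ≤ r ∧
      p ∈ c.support ∧ q ∈ c.support ∧ ∃ z ∈ c.support, z.1 = b₁ ∨ z.1 = b₂

/-- `{a₁,a₂}` crosses `{b₁,b₂}`: some copies of `a₁`, `a₂` cross `{b₁,b₂}`. -/
def Crosses (G : SimpleGraph V) (r : ℕ) (a₁ a₂ b₁ b₂ : V) : Prop :=
  ∃ p q : EVert V, p.1 = a₁ ∧ q.1 = a₂ ∧ CrossesPair G r b₁ b₂ p q

/-- Some copy of `x` lies in the same component of `Expl(v,w) - v - w` as some copy of `y`. -/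
def CopyReach (G : SimpleGraph V) (r : ℕ) (v w x y : V) : Prop :=
  ∃ (p q : EVert V) (hp : p ∈ pexplVerts G v w r) (hq : q ∈ pexplVerts G v w r),
    p.1 = x ∧ q.1 = y ∧ (pexpl G v w r).Reachable ⟨p, hp⟩ ⟨q, hq⟩

/-- A cycle through `a₁` alternating between `{a₁,a₂}` and `{b₁,b₂}`: the four vertices are
distinct and `b₁`, `b₂` lie on different arcs of the cycle between `a₁` and `a₂`. -/
def AltCycle (G : SimpleGraph V) (a₁ a₂ b₁ b₂ : V) (c : G.Walk a₁ a₁) : Prop :=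
  c.IsCycle ∧ b₁ ≠ b₂ ∧ b₁ ∉ ({a₁, a₂} : Set V) ∧ b₂ ∉ ({a₁, a₂} : Set V) ∧
  ∃ (p : G.Walk a₁ a₂) (q : G.Walk a₂ a₁), c = p.append q ∧
    ((b₁ ∈ p.support ∧ b₂ ∈ q.support) ∨ (b₂ ∈ p.support ∧ b₁ ∈ q.support))

/-- `S` is generated over `𝔽₂` by members of `C` (sum = symmetric difference). -/
def GeneratedBy {α : Type*} (C : Set (Set (Sym2 α))) (S : Set (Sym2 α)) : Prop :=
  ∃ l : List (Set (Sym2 α)), (∀ A ∈ l, A ∈ C) ∧ l.foldr symmDiff ∅ = S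

/-- The edge set of a walk. -/
def walkEdgeSet {α : Type*} {H : SimpleGraph α} {x y : α} (c : H.Walk x y) : Set (Sym2 α) :=
  {e | e ∈ c.edges}


private lemma support_getElem?' {G : SimpleGraph V} {a b : V} (p : G.Walk a b) :
    ∀ i, i ≤ p.length → p.support[i]? = some (p.getVert i) := by
  induction p with
  | nil =>
    intro i hi
    simp only [Walk.length_nil, Nat.le_zero] at hi
    subst hi
    simp [Walk.support_nil]
  | cons h q ih =>
    intro i hi
    cases i with
    | zero => simp [Walk.support_cons]
    | succ n =>
      rw [Walk.support_cons, List.getElem?_cons_succ, Walk.getVert_cons_succ]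
      exact ih n (by simpa [Walk.length_cons] using hi)

private lemma tail_getElem? {G : SimpleGraph V} {v : V} (c : G.Walk v v) {k : ℕ}
    (hk1 : 1 ≤ k) (hk : k ≤ c.length) :
    c.support.tail[k - 1]? = some (c.getVert k) := by
  have h1 := support_getElem?' c k hk
  rw [Walk.support_eq_cons] at h1
  obtain ⟨m, rfl⟩ : ∃ m, k = m + 1 := ⟨k - 1, by omega⟩
  simpa using h1

private lemma cycle_getVert_inj₁ {G : SimpleGraph V} {v : V} {c : G.Walk v v} (hc : c.IsCycle)
    {i j : ℕ} (hi1 : 1 ≤ i) (hi : i ≤ c.length) (hj1 : 1 ≤ j) (hj : j ≤ c.length)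
    (h : c.getVert i = c.getVert j) : i = j := by
  have hnd : c.support.tail.Nodup := hc.support_nodup
  have hlen : c.support.tail.length = c.length := by
    rw [List.length_tail, Walk.length_support]; omega
  have h1 := tail_getElem? c hi1 hi
  have h2 := tail_getElem? c hj1 hj
  have h3 : c.support.tail[i - 1]? = c.support.tail[j - 1]? := by rw [h1, h2, h]
  have := (List.getElem?_inj (by omega) hnd).mp h3
  omega

private lemma cycle_getVert_inj {G : SimpleGraph V} {v : V} {c : G.Walk v v} (hc : c.IsCycle)
    {i j : ℕ} (hi : i < c.length) (hj : j < c.length)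
    (h : c.getVert i = c.getVert j) : i = j := by
  rcases Nat.eq_zero_or_pos i with rfl | hi1
  · rcases Nat.eq_zero_or_pos j with rfl | hj1
    · rfl
    · have hv : c.getVert j = c.getVert c.length := by
        rw [Walk.getVert_length, ← h, Walk.getVert_zero]
      have := cycle_getVert_inj₁ hc hj1 (by omega) (by omega) le_rfl hv
      omega
  · rcases Nat.eq_zero_or_pos j with rfl | hj1
    · have hv : c.getVert i = c.getVert c.length := by
        rw [Walk.getVert_length, h, Walk.getVert_zero]
      have := cycle_getVert_inj₁ hc hi1 (by omega) (by omega) le_rfl hv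
      omega
    · exact cycle_getVert_inj₁ hc hi1 (by omega) hj1 (by omega) h

private lemma end_mem_tail {G : SimpleGraph V} {v : V} {c : G.Walk v v} (h : 0 < c.length) :
    v ∈ c.support.tail := by
  have h1 := tail_getElem? c h le_rfl
  rw [Walk.getVert_length] at h1
  obtain ⟨h2, h3⟩ := List.getElem?_eq_some_iff.mp h1
  have h4 := List.getElem_mem h2
  rwa [h3] at h4

private lemma dist_le_half {G : SimpleGraph V} {v u : V} (c : G.Walk v v) (hu : u ∈ c.support) :
    G.dist v u ≤ c.length / 2 := by
  classical
  have h1 : G.dist v u ≤ (c.takeUntil u hu).length := SimpleGraph.dist_le _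
  have h2 : G.dist v u ≤ (c.dropUntil u hu).length := by
    rw [SimpleGraph.dist_comm]; exact SimpleGraph.dist_le _
  have h3 : (c.takeUntil u hu).length + (c.dropUntil u hu).length = c.length := by
    have := congr_arg Walk.length (c.take_spec hu)
    rwa [Walk.length_append] at this
  omega

private lemma exists_coloring {G : SimpleGraph V} {v : V} {c : G.Walk v v} (hc : c.IsCycle)
    (heven : Even c.length)
    (hsupp : ∀ u : V, u ∈ c.support) (hedge : ∀ e ∈ G.edgeSet, e ∈ c.edges) :
    ∃ f : V → ZMod 2, ∀ x y, G.Adj x y → f y = f x + 1 := by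
  classical
  have hlen3 := hc.three_le_length
  have hex : ∀ u : V, ∃ i, i < c.length ∧ c.getVert i = u := by
    intro u
    obtain ⟨i, hi⟩ := List.mem_iff_getElem?.mp (hsupp u)
    have hilt : i < c.support.length := by
      by_contra hcon
      rw [List.getElem?_eq_none (by omega)] at hi
      simp at hi
    rw [Walk.length_support] at hilt
    have h1 : c.getVert i = u := by
      have := support_getElem?' c i (by omega)
      rw [this] at hi
      exact Option.some_injective _ hi
    rcases Nat.lt_or_ge i c.length with h | h
    · exact ⟨i, h, h1⟩
    · refine ⟨0, by omega, ?_⟩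
      rw [Walk.getVert_zero, ← h1]
      have : i = c.length := by omega
      rw [this, Walk.getVert_length]
  choose idx hidxlt hidx using hex
  have huniq : ∀ (i : ℕ) (u : V), i < c.length → c.getVert i = u → i = idx u := by
    intro i u hi hgv
    exact cycle_getVert_inj hc hi (hidxlt u) (by rw [hgv, hidx])
  have main : ∀ (x y : V) (i : ℕ), i < c.length → c.getVert i = x → c.getVert (i + 1) = y →
      ((idx y : ℕ) : ZMod 2) = ((idx x : ℕ) : ZMod 2) + 1 := by
    intro x y i hilt h1 h2
    have hix : idx x = i := (huniq i x hilt h1).symm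
    by_cases hi1 : i + 1 < c.length
    · have hiy : idx y = i + 1 := (huniq _ y hi1 h2).symm
      rw [hix, hiy]; push_cast; ring
    · have hieq : i + 1 = c.length := by omega
      have hyv : y = v := by rw [← h2, hieq, Walk.getVert_length]
      have hiy : idx y = 0 := (huniq 0 y (by omega) (by rw [Walk.getVert_zero, hyv])).symm
      rw [hix, hiy]
      have hcast : ((i : ℕ) : ZMod 2) + 1 = ((i + 1 : ℕ) : ZMod 2) := by push_cast; ring
      rw [hcast, hieq]
      simp only [Nat.cast_zero]
      exact ((ZMod.natCast_eq_zero_iff _ 2).mpr (even_iff_two_dvd.mp heven)).symm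
  refine ⟨fun u => ((idx u : ℕ) : ZMod 2), ?_⟩
  intro x y hxy
  have hadj : c.toSubgraph.Adj x y := by
    rw [← SimpleGraph.Subgraph.mem_edgeSet, Walk.mem_edges_toSubgraph]
    exact hedge _ hxy
  obtain ⟨i, hsym, hilt⟩ := (Walk.toSubgraph_adj_iff _).mp hadj
  rcases Sym2.eq_iff.mp hsym with ⟨h1, h2⟩ | ⟨h1, h2⟩
  · exact main x y i hilt h1 h2
  · have := main y x i hilt h1 h2
    have key : ∀ a b : ZMod 2, a = b + 1 → b = a + 1 := by decide
    exact key _ _ this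

private lemma not_both_half {G : SimpleGraph V} {v : V} {c : G.Walk v v} (hc : c.IsCycle)
    (hsupp : ∀ u : V, u ∈ c.support) (hedge : ∀ e ∈ G.edgeSet, e ∈ c.edges)
    {x y : V} (hxy : G.Adj x y) (heven : Even c.length) :
    ¬(G.dist v x = c.length / 2 ∧ G.dist v y = c.length / 2) := by
  classical
  rintro ⟨h1, h2⟩
  obtain ⟨f, hf⟩ := exists_coloring hc heven hsupp hedge
  have hpar : ∀ (a b : V) (p : G.Walk a b), f b = f a + (p.length : ZMod 2) := by
    intro a b p
    induction p with
    | nil => simp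
    | cons h q ih =>
      rw [Walk.length_cons]
      push_cast
      rw [ih, hf _ _ h]
      ring
  have hrx : G.Reachable v x := ⟨c.takeUntil x (hsupp x)⟩
  have hry : G.Reachable v y := ⟨c.takeUntil y (hsupp y)⟩
  obtain ⟨p, hp⟩ := hrx.exists_walk_length_eq_dist
  obtain ⟨q, hq⟩ := hry.exists_walk_length_eq_dist
  have e1 := hpar v x p
  have e2 := hpar v y q
  rw [hp, h1] at e1
  rw [hq, h2] at e2
  have h3 : f y = f x := by rw [e1, e2]
  have h4 := hf x y hxy
  rw [h3] at h4
  exact one_ne_zero (left_eq_add.mp h4)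

private lemma cycle_length_ge {G : SimpleGraph V} {v : V} {c : G.Walk v v} (hc : c.IsCycle)
    (hsupp : ∀ u : V, u ∈ c.support) (hedge : ∀ e ∈ G.edgeSet, e ∈ c.edges)
    {u : V} (d : G.Walk u u) (hd : d.IsCycle) : c.length ≤ d.length := by
  classical
  have hnbr : ∀ x : V, ∃ p q : V, p ≠ q ∧ ∀ y, G.Adj x y → y = p ∨ y = q := by
    intro x
    have hcc : (c.rotate x (hsupp x)).IsCycle := hc.rotate _
    set cr := c.rotate x (hsupp x) with hcr
    have h3 : 3 ≤ cr.length := hcc.three_le_length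
    refine ⟨cr.getVert 1, cr.getVert (cr.length - 1), ?_, ?_⟩
    · intro h
      have := cycle_getVert_inj hcc (by omega) (by omega) h
      omega
    · intro y hxy
      have hadj : cr.toSubgraph.Adj x y := by
        rw [← SimpleGraph.Subgraph.mem_edgeSet, Walk.mem_edges_toSubgraph]
        exact ((c.rotate_edges x (hsupp x)).mem_iff).mpr (hedge _ hxy)
      obtain ⟨i, hsym, hilt⟩ := (Walk.toSubgraph_adj_iff _).mp hadj
      have hx0 : cr.getVert 0 = x := cr.getVert_zero
      rcases Sym2.eq_iff.mp hsym with ⟨hx', hy'⟩ | ⟨hy', hx'⟩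
      · have : i = 0 := cycle_getVert_inj hcc hilt (by omega) (hx'.trans hx0.symm)
        left; rw [← hy', this]
      · by_cases h1 : i + 1 < cr.length
        · have : i + 1 = 0 := cycle_getVert_inj hcc h1 (by omega) (hx'.trans hx0.symm)
          omega
        · have hieq : i = cr.length - 1 := by omega
          right; rw [← hy', hieq]
  have hd3 := hd.three_le_length
  have hdnb : ∀ x, x ∈ d.support → ∃ a b : V, a ≠ b ∧ d.toSubgraph.Adj x a ∧
      d.toSubgraph.Adj x b := by
    intro x hx
    have hdc : (d.rotate x hx).IsCycle := hd.rotate _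
    set d' := d.rotate x hx with hd'
    have hts : d'.toSubgraph = d.toSubgraph := Walk.toSubgraph_rotate d hx
    have h3 : 3 ≤ d'.length := hdc.three_le_length
    refine ⟨d'.getVert 1, d'.getVert (d'.length - 1), ?_, ?_, ?_⟩
    · intro h
      have := cycle_getVert_inj hdc (by omega) (by omega) h
      omega
    · rw [← hts]
      have := Walk.toSubgraph_adj_getVert d' (show 0 < d'.length by omega)
      simpa using this
    · rw [← hts]
      have h4 := Walk.toSubgraph_adj_getVert d' (show d'.length - 1 < d'.length by omega)
      have h5 : d'.getVert (d'.length - 1 + 1) = x := by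
        rw [show d'.length - 1 + 1 = d'.length by omega, Walk.getVert_length]
      rw [h5] at h4
      exact h4.symm
  have hclose : ∀ x, x ∈ d.support → ∀ y, G.Adj x y → y ∈ d.support := by
    intro x hx y hxy
    obtain ⟨p, q, hpq, hPQ⟩ := hnbr x
    obtain ⟨a, b, hab, ha, hb⟩ := hdnb x hx
    have hamem : a ∈ d.support := (Walk.mem_verts_toSubgraph d).mp ha.snd_mem
    have hbmem : b ∈ d.support := (Walk.mem_verts_toSubgraph d).mp hb.snd_mem
    have hA := hPQ a ha.adj_sub
    have hB := hPQ b hb.adj_sub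
    have hy : y = a ∨ y = b := by
      rcases hPQ y hxy with rfl | rfl <;> rcases hA with rfl | rfl <;>
        rcases hB with rfl | rfl <;> tauto
    rcases hy with rfl | rfl
    · exact hamem
    · exact hbmem
  have hall : ∀ w : V, w ∈ d.support := by
    have hstep : ∀ (a b : V) (p : G.Walk a b), a ∈ d.support → b ∈ d.support := by
      intro a b p
      induction p with
      | nil => exact id
      | cons h q ih => intro ha; exact ih (hclose _ ha _ h)
    intro w
    exact hstep u w ((c.takeUntil u (hsupp u)).reverse.append (c.takeUntil w (hsupp w)))
      d.start_mem_support
  have hsub : c.support.tail ⊆ d.support.tail := by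
    intro z hz
    have hzmem : z ∈ d.support := hall z
    rw [Walk.support_eq_cons] at hzmem
    rcases List.mem_cons.mp hzmem with rfl | h
    · exact end_mem_tail (show 0 < d.length by omega)
    · exact h
  have hle := (List.subperm_of_subset hc.support_nodup hsub).length_le
  rw [List.length_tail, List.length_tail, Walk.length_support, Walk.length_support] at hle
  omega

/-- Sharpness of the cycle-generation lemma: if `G` is a cycle of length `r` (witnessed by a
spanning cycle `c` of length `r` using all edges), then `G` equals the ball `B_{r/2}(v)` for
every vertex `v`, and the cycle `c` is not generated by cycles of length at most `r - 1`. -/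
theorem stmt4 {V : Type u} (G : SimpleGraph V) (r : ℕ) {v₀ : V} (c : G.Walk v₀ v₀)
    (hc : c.IsCycle) (hlen : c.length = r)
    (hsupp : ∀ u : V, u ∈ c.support) (hedge : ∀ e ∈ G.edgeSet, e ∈ c.edges) :
    (∀ v : V, ball G v r = (⊤ : G.Subgraph)) ∧
    ¬ GeneratedBy
        {S | ∃ (u : V) (d : G.Walk u u), d.IsCycle ∧ d.length ≤ r - 1 ∧ S = walkEdgeSet d}
        (walkEdgeSet c) := by
  classical
  have hr3 : 3 ≤ r := hlen ▸ hc.three_le_length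
  constructor
  · intro v
    have hcc : (c.rotate v (hsupp v)).IsCycle := hc.rotate _
    set cr := c.rotate v (hsupp v) with hcrdef
    have hcrlen : cr.length = r := by
      rw [← hlen, ← Walk.length_edges, ← Walk.length_edges,
        (c.rotate_edges v (hsupp v)).perm.length_eq]
    have hcrsupp : ∀ u : V, u ∈ cr.support := by
      intro u
      have hut : u ∈ c.support.tail := by
        rcases List.mem_cons.mp (Walk.support_eq_cons c ▸ hsupp u) with rfl | h
        · exact end_mem_tail (by omega)
        · exact h
      exact List.mem_of_mem_tail (((Walk.support_rotate c v (hsupp v)).perm.mem_iff).mpr hut)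
    have hcredge : ∀ e ∈ G.edgeSet, e ∈ cr.edges :=
      fun e he => ((c.rotate_edges v (hsupp v)).mem_iff).mpr (hedge e he)
    have hverts : ∀ u, u ∈ ballVerts G v r := by
      intro u
      refine ⟨⟨cr.takeUntil u (hcrsupp u)⟩, ?_⟩
      have := dist_le_half cr (hcrsupp u)
      rwa [hcrlen] at this
    refine SimpleGraph.Subgraph.ext ?_ ?_
    · rw [SimpleGraph.Subgraph.verts_top]
      exact Set.eq_univ_iff_forall.mpr hverts
    · ext x y
      rw [SimpleGraph.Subgraph.top_adj]
      constructor
      · rintro ⟨h, -⟩; exact h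
      · intro h
        refine ⟨h, hverts x, hverts y, fun he hcon => ?_⟩
        have := not_both_half hcc hcrsupp hcredge h (by rwa [hcrlen])
        rw [hcrlen] at this
        exact this hcon
  · rintro ⟨l, hl, hfold⟩
    have hnil : l = [] := by
      rw [List.eq_nil_iff_forall_not_mem]
      intro A hA
      obtain ⟨u, d, hd, hdlen, rfl⟩ := hl A hA
      have := cycle_length_ge hc hsupp hedge d hd
      omega
    rw [hnil] at hfold
    simp only [List.foldr_nil] at hfold
    have hne : c.edges ≠ [] := by
      intro h
      have h2 := c.length_edges
      rw [h] at h2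
      simp at h2
      omega
    obtain ⟨e, he⟩ := List.exists_mem_of_ne_nil _ hne
    have hmem : e ∈ walkEdgeSet c := he
    rw [← hfold] at hmem
    exact hmem

end LocalSep
end

section
/- If an r-local 2-separator {a₁,a₂} of a graph G crosses an r-local 2-separator {b₁,b₂}, then there is a cycle of G of length at most r that alternates between {a₁,a₂} and {b₁,b₂}, i.e., the cyclic order in which the four vertices appear on the cycle is a₁ b₁ a₂ b₂ or a₁ b₂ a₂ b₁. Moreover, any cycle of G of length at most r through a₁ and a₂ containing b₁ or b₂ alternates between the two local 2-separators. -/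
open SimpleGraph

universe u

namespace LocalSep

variable {V : Type u}

/-! ### Generic helpers -/

section Helpers

variable [DecidableEq V] {G : SimpleGraph V}

lemma walkIn_nil {B : G.Subgraph} {x : V} (hx : x ∈ B.verts) :
    WalkIn B (Walk.nil : G.Walk x x) := by
  unfold WalkIn
  rw [Walk.toSubgraph]
  exact (SimpleGraph.singletonSubgraph_le_iff x B).2 hx

lemma walkIn_cons {B : G.Subgraph} {x y z : V} (h : G.Adj x y) {p : G.Walk y z}
    (hB : B.Adj x y) (hp : WalkIn B p) : WalkIn B (Walk.cons h p) := by
  unfold WalkIn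
  rw [Walk.toSubgraph]
  exact sup_le (SimpleGraph.subgraphOfAdj_le_of_adj B hB) hp

lemma WalkIn.of_append_left {B : G.Subgraph} {x y z : V} {p : G.Walk x y} {q : G.Walk y z}
    (h : WalkIn B (p.append q)) : WalkIn B p := by
  refine le_trans ?_ h
  rw [Walk.toSubgraph_append]
  exact le_sup_left

lemma WalkIn.of_append_right {B : G.Subgraph} {x y z : V} {p : G.Walk x y} {q : G.Walk y z}
    (h : WalkIn B (p.append q)) : WalkIn B q := by
  refine le_trans ?_ h
  rw [Walk.toSubgraph_append]
  exact le_sup_right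

lemma WalkIn.adj_of_cons {B : G.Subgraph} {x y z : V} {h : G.Adj x y} {p : G.Walk y z}
    (hin : WalkIn B (Walk.cons h p)) : B.Adj x y := by
  unfold WalkIn at hin
  rw [Walk.toSubgraph] at hin
  exact (le_trans le_sup_left hin).2 (by simp)

lemma WalkIn.of_cons {B : G.Subgraph} {x y z : V} {h : G.Adj x y} {p : G.Walk y z}
    (hin : WalkIn B (Walk.cons h p)) : WalkIn B p := by
  unfold WalkIn at hin ⊢
  rw [Walk.toSubgraph] at hin
  exact le_trans le_sup_right hin

lemma mem_ballVerts_of_two_mul {b u : V} {r : ℕ} (h : G.Reachable b u)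
    (hd : 2 * G.dist b u ≤ r) : u ∈ ballVerts G b r :=
  ⟨h, (Nat.le_div_iff_mul_le (by norm_num)).2 (by omega)⟩

/-- The master lemma: a walk whose endpoints are close to `b` (quantitatively:
`A + dist b y + length ≤ r` with `dist b x ≤ A`) lies in the ball of radius `r/2`. -/
lemma walkIn_ball (b : V) (r : ℕ) :
    ∀ {x y : V} (p : G.Walk x y) (A : ℕ), G.Reachable b x → G.dist b x ≤ A →
      A + G.dist b y + p.length ≤ r → WalkIn (ball G b r) p := by
  intro x y p
  induction p with
  | nil =>
    intro A hbx hA hr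
    exact walkIn_nil (mem_ballVerts_of_two_mul hbx (by simp at hr; omega))
  | @cons x w y h p ih =>
    intro A hbx hA hr
    rw [Walk.length_cons] at hr
    obtain ⟨wb, hwb⟩ := hbx.exists_walk_length_eq_dist
    have hbw : G.Reachable b w := hbx.trans h.reachable
    have hby : G.Reachable b y := hbw.trans ⟨p⟩
    have hdw : G.dist b w ≤ A + 1 := by
      have := SimpleGraph.dist_le (wb.append (Walk.cons h Walk.nil))
      simp [hwb] at this
      omega
    obtain ⟨wy, hwy⟩ := hby.exists_walk_length_eq_dist
    have hdx2 : G.dist b x ≤ G.dist b y + (p.length + 1) := by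
      have := SimpleGraph.dist_le (wy.append (Walk.cons h p).reverse)
      simp [hwy] at this
      omega
    have hdw2 : G.dist b w ≤ G.dist b y + p.length := by
      have := SimpleGraph.dist_le (wy.append p.reverse)
      simp [hwy] at this
      omega
    refine walkIn_cons h ⟨h, ⟨hbx, ?_⟩, ⟨hbw, ?_⟩, ?_⟩ (ih (A + 1) hbw hdw (by omega))
    · exact (Nat.le_div_iff_mul_le (by norm_num)).2 (by omega)
    · exact (Nat.le_div_iff_mul_le (by norm_num)).2 (by omega)
    · rintro he ⟨e1, e2⟩
      have h2 : r / 2 * 2 = r := Nat.div_two_mul_two_of_even he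
      omega

lemma exists_geodesic {x y : V} (h : G.Reachable x y) :
    ∃ p : G.Walk x y, p.IsPath ∧ p.length = G.dist x y := by
  obtain ⟨w, hw⟩ := h.exists_walk_length_eq_dist
  exact ⟨w.bypass, w.bypass_isPath,
    le_antisymm (le_trans w.length_bypass_le hw.le) (SimpleGraph.dist_le _)⟩

lemma left_mem_core {b₁ b₂ : V} (h : G.Reachable b₁ b₂) : b₁ ∈ core G b₁ b₂ := by
  obtain ⟨p, hp, hl⟩ := exists_geodesic h
  exact ⟨p, hp, hl, p.start_mem_support⟩

lemma right_mem_core {b₁ b₂ : V} (h : G.Reachable b₁ b₂) : b₂ ∈ core G b₁ b₂ := by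
  obtain ⟨p, hp, hl⟩ := exists_geodesic h
  exact ⟨p, hp, hl, p.end_mem_support⟩

lemma core_facts {b₁ b₂ x : V} (hx : x ∈ core G b₁ b₂) :
    G.dist b₁ x + G.dist b₂ x ≤ G.dist b₁ b₂ ∧ G.Reachable b₁ x ∧ G.Reachable b₂ x := by
  obtain ⟨w, hw, hlen, hmem⟩ := hx
  have hspec := w.take_spec hmem
  have hlens : (w.takeUntil x hmem).length + (w.dropUntil x hmem).length = w.length := by
    have := congrArg Walk.length hspec
    rwa [Walk.length_append] at this
  have h1 : G.dist b₁ x ≤ (w.takeUntil x hmem).length := SimpleGraph.dist_le _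
  have h2 : G.dist x b₂ ≤ (w.dropUntil x hmem).length := SimpleGraph.dist_le _
  refine ⟨?_, ⟨w.takeUntil x hmem⟩, ⟨(w.dropUntil x hmem).reverse⟩⟩
  rw [SimpleGraph.dist_comm (u := b₂)]
  omega

end Helpers
/-! ### The label-agreement lemma -/

section Shared

variable [DecidableEq V] {G : SimpleGraph V}

lemma labelIn_subset {b₁ b₂ u : V} {r : ℕ} (C : Set V)
    (hC1 : b₁ ∈ C) (hC2 : b₂ ∈ C)
    (hCd : ∀ x ∈ C, G.dist b₁ x + G.dist b₂ x ≤ G.dist b₁ b₂)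
    (hCr : ∀ x ∈ C, G.Reachable b₁ x ∧ G.Reachable b₂ x)
    (h1 : G.Reachable b₁ u) (h2 : G.Reachable b₂ u)
    (hsum : G.dist b₁ u + G.dist b₂ u + G.dist b₁ b₂ ≤ r) :
    labelIn G (ball G b₁ r) C u ⊆ labelIn G (ball G b₂ r) C u := by
  have hbb : G.Reachable b₁ b₂ := (hCr b₂ hC2).1
  -- triangle inequalities, via explicit walks
  have tri1 : G.dist b₁ u ≤ G.dist b₁ b₂ + G.dist b₂ u := by
    obtain ⟨w1, hw1⟩ := hbb.exists_walk_length_eq_dist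
    obtain ⟨w2, hw2⟩ := h2.exists_walk_length_eq_dist
    have := SimpleGraph.dist_le (w1.append w2)
    rw [Walk.length_append, hw1, hw2] at this
    omega
  have tri2 : G.dist b₂ u ≤ G.dist b₁ b₂ + G.dist b₁ u := by
    obtain ⟨w1, hw1⟩ := hbb.symm.exists_walk_length_eq_dist
    obtain ⟨w2, hw2⟩ := h1.exists_walk_length_eq_dist
    have := SimpleGraph.dist_le (w1.append w2)
    rw [Walk.length_append, hw1, hw2] at this
    rw [SimpleGraph.dist_comm (u := b₂) (v := b₁)] at this
    omega
  rintro l ⟨c, hc, p, hp, hpin, hmin, rfl⟩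
  -- the geodesic from b₁ to u lies in the ball around b₁
  obtain ⟨γ₁, hγ₁p, hγ₁l⟩ := exists_geodesic h1
  have hγ₁in : WalkIn (ball G b₁ r) γ₁ :=
    walkIn_ball b₁ r γ₁ 0 (Reachable.refl b₁) (by simp) (by simp [hγ₁l]; omega)
  have hple : p.length ≤ G.dist b₁ u := by
    have := hmin b₁ hC1 γ₁ hγ₁p hγ₁in
    omega
  -- `p` lies in the ball around b₂
  have hpin2 : WalkIn (ball G b₂ r) p := by
    refine walkIn_ball b₂ r p (G.dist b₂ c) (hCr c hc).2 le_rfl ?_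
    have := hCd c hc
    omega
  -- minimality in the ball around b₂
  set S : Set ℕ := {n | ∃ c' ∈ C, ∃ q : G.Walk c' u, q.IsPath ∧ WalkIn (ball G b₂ r) q ∧
    q.length = n} with hS
  obtain ⟨γ₂, hγ₂p, hγ₂l⟩ := exists_geodesic h2
  have hγ₂in : WalkIn (ball G b₂ r) γ₂ :=
    walkIn_ball b₂ r γ₂ 0 (Reachable.refl b₂) (by simp) (by simp [hγ₂l]; omega)
  have hSne : S.Nonempty := ⟨γ₂.length, b₂, hC2, γ₂, hγ₂p, hγ₂in, rfl⟩
  obtain ⟨c', hc', q', hq'p, hq'in, hq'len⟩ := Nat.sInf_mem hSne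
  have hq'd : q'.length ≤ G.dist b₂ u := by
    have hmemS : γ₂.length ∈ S := ⟨b₂, hC2, γ₂, hγ₂p, hγ₂in, rfl⟩
    have := Nat.sInf_le hmemS
    omega
  -- q' transfers back into the ball around b₁
  have hq'in1 : WalkIn (ball G b₁ r) q' := by
    refine walkIn_ball b₁ r q' (G.dist b₁ c') (hCr c' hc').1 le_rfl ?_
    have := hCd c' hc'
    omega
  have hpmin : p.length ≤ sInf S := by
    have := hmin c' hc' q' hq'p hq'in1
    omega
  refine ⟨c, hc, p, hp, hpin2, ?_, rfl⟩
  intro c'' hc'' q hq hqin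
  exact le_trans hpmin (Nat.sInf_le ⟨c'', hc'', q, hq, hqin, rfl⟩)

lemma labelIn_ball_comm {b₁ b₂ u : V} {r : ℕ}
    (hbb : G.Reachable b₁ b₂) (h1 : G.Reachable b₁ u) (h2 : G.Reachable b₂ u)
    (hsum : G.dist b₁ u + G.dist b₂ u + G.dist b₁ b₂ ≤ r) :
    labelIn G (ball G b₁ r) (core G b₁ b₂) u = labelIn G (ball G b₂ r) (core G b₁ b₂) u := by
  have hCd : ∀ x ∈ core G b₁ b₂, G.dist b₁ x + G.dist b₂ x ≤ G.dist b₁ b₂ :=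
    fun x hx => (core_facts hx).1
  have hCr : ∀ x ∈ core G b₁ b₂, G.Reachable b₁ x ∧ G.Reachable b₂ x :=
    fun x hx => (core_facts hx).2
  refine subset_antisymm
    (labelIn_subset _ (left_mem_core hbb) (right_mem_core hbb) hCd hCr h1 h2 hsum) ?_
  refine labelIn_subset (b₁ := b₂) (b₂ := b₁) _ (right_mem_core hbb) (left_mem_core hbb)
    (fun x hx => ?_) (fun x hx => ⟨(hCr x hx).2, (hCr x hx).1⟩) h2 h1 ?_
  · rw [SimpleGraph.dist_comm (u := b₂) (v := b₁)]
    have := hCd x hx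
    omega
  · rw [SimpleGraph.dist_comm (u := b₂) (v := b₁)]
    omega

/-- The canonical copy of a vertex in the explorer-neighbourhood. -/
def scopy (G : SimpleGraph V) (b₁ b₂ : V) (r : ℕ) (u : V) : EVert V :=
  (u, labelIn G (ball G b₁ r) (core G b₁ b₂) u)

lemma copy_eq {b₁ b₂ : V} {r : ℕ} (hbb : G.Reachable b₁ b₂)
    {z : EVert V} (hz : z ∈ explVerts G b₁ b₂ r) {u : V} (hzu : z.1 = u)
    (hsum : G.dist b₁ u + G.dist b₂ u + G.dist b₁ b₂ ≤ r) :
    z = scopy G b₁ b₂ r u := by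
  rcases hz with ⟨hmem, hlab⟩ | ⟨hmem, hlab⟩
  · exact Prod.ext hzu (by rw [hlab, hzu]; rfl)
  · have h2 : G.Reachable b₂ u := hzu ▸ hmem.1
    have h1 : G.Reachable b₁ u := hbb.trans h2
    exact Prod.ext hzu (by rw [hlab, hzu, scopy, labelIn_ball_comm hbb h1 h2 hsum])

lemma reach_of_explVerts {b₁ b₂ : V} {r : ℕ} (hbb : G.Reachable b₁ b₂)
    {z : EVert V} (hz : z ∈ explVerts G b₁ b₂ r) :
    G.Reachable b₁ z.1 ∧ G.Reachable b₂ z.1 := by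
  rcases hz with ⟨hmem, -⟩ | ⟨hmem, -⟩
  · exact ⟨hmem.1, hbb.symm.trans hmem.1⟩
  · exact ⟨hbb.trans hmem.1, hmem.1⟩

lemma scopy_b₁ {b₁ b₂ : V} {r : ℕ} (hbb : G.Reachable b₁ b₂) (hDr : 2 * G.dist b₁ b₂ ≤ r)
    {z : EVert V} (hz : z ∈ explVerts G b₁ b₂ r) (hzu : z.1 = b₁) :
    z = scopy G b₁ b₂ r b₁ :=
  copy_eq hbb hz hzu (by rw [SimpleGraph.dist_self, SimpleGraph.dist_comm (u := b₂)]; omega)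

lemma scopy_b₂ {b₁ b₂ : V} {r : ℕ} (hbb : G.Reachable b₁ b₂) (hDr : 2 * G.dist b₁ b₂ ≤ r)
    {z : EVert V} (hz : z ∈ explVerts G b₁ b₂ r) (hzu : z.1 = b₂) :
    z = scopy G b₁ b₂ r b₂ :=
  copy_eq hbb hz hzu (by rw [SimpleGraph.dist_self]; omega)

end Shared
/-! ### Homomorphisms and cycle machinery -/

section Machinery

variable [DecidableEq V] {G : SimpleGraph V}

/-- Projection of the explorer-neighbourhood to `G`. -/
def projHom (G : SimpleGraph V) (b₁ b₂ : V) (r : ℕ) : expl G b₁ b₂ r →g G where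
  toFun := Prod.fst
  map_rel' := by
    rintro p q (⟨-, -, h⟩ | ⟨-, -, h⟩) <;> exact h.adj_sub

/-- Lift into the copy of the ball around `b₁`. -/
def liftHom₁ (G : SimpleGraph V) (b₁ b₂ : V) (r : ℕ) :
    (ball G b₁ r).spanningCoe →g expl G b₁ b₂ r where
  toFun u := (u, labelIn G (ball G b₁ r) (core G b₁ b₂) u)
  map_rel' := by
    intro u v h
    exact Or.inl ⟨⟨h.2.1, rfl⟩, ⟨h.2.2.1, rfl⟩, h⟩

/-- Lift into the copy of the ball around `b₂`. -/
def liftHom₂ (G : SimpleGraph V) (b₁ b₂ : V) (r : ℕ) :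
    (ball G b₂ r).spanningCoe →g expl G b₁ b₂ r where
  toFun u := (u, labelIn G (ball G b₂ r) (core G b₁ b₂) u)
  map_rel' := by
    intro u v h
    exact Or.inr ⟨⟨h.2.1, rfl⟩, ⟨h.2.2.1, rfl⟩, h⟩

lemma dist_fst_le {b₁ b₂ : V} {r : ℕ} {x y : EVert V} (W : (expl G b₁ b₂ r).Walk x y) :
    G.dist x.1 y.1 ≤ W.length := by
  have := SimpleGraph.dist_le (W.map (projHom G b₁ b₂ r))
  rwa [Walk.length_map] at this

lemma isCycle_transfer {v : V} {c : G.Walk v v} (H : SimpleGraph V)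
    (h : ∀ e, e ∈ c.edges → e ∈ H.edgeSet) (hc : c.IsCycle) : (c.transfer H h).IsCycle := by
  refine ⟨⟨⟨?_⟩, ?_⟩, ?_⟩
  · rw [Walk.edges_transfer]
    exact hc.isCircuit.isTrail.edges_nodup
  · intro hn
    have h3 := hc.three_le_length
    have hl : (c.transfer H h).length = c.length := Walk.length_transfer _ _
    rw [hn, Walk.length_nil] at hl
    omega
  · rw [Walk.support_transfer]
    exact hc.support_nodup

lemma isCycle_map_of_injOn {W : Type u} {H : SimpleGraph W} (f : G →g H) {v : V}
    {c : G.Walk v v} (hc : c.IsCycle)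
    (hinj : ∀ x ∈ c.support, ∀ y ∈ c.support, f x = f y → x = y) :
    (c.map f).IsCycle := by
  refine ⟨⟨⟨?_⟩, ?_⟩, ?_⟩
  · rw [Walk.edges_map]
    refine List.Nodup.map_on ?_ hc.isCircuit.isTrail.edges_nodup
    intro e₁ he₁ e₂ he₂ hmap
    induction e₁ with
    | _ a b =>
      induction e₂ with
      | _ a' b' =>
        rw [Sym2.map_pair_eq, Sym2.map_pair_eq, Sym2.eq_iff] at hmap
        have ha := Walk.fst_mem_support_of_mem_edges c he₁
        have hb := Walk.snd_mem_support_of_mem_edges c he₁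
        have ha' := Walk.fst_mem_support_of_mem_edges c he₂
        have hb' := Walk.snd_mem_support_of_mem_edges c he₂
        rcases hmap with ⟨h1, h2⟩ | ⟨h1, h2⟩
        · rw [hinj a ha a' ha' h1, hinj b hb b' hb' h2]
        · rw [hinj a ha b' hb' h1, hinj b hb a' ha' h2, Sym2.eq_swap]
  · intro hn
    have h3 := hc.three_le_length
    have hl : (c.map f).length = c.length := by rw [Walk.length_map]
    rw [hn, Walk.length_nil] at hl
    omega
  · rw [Walk.support_map, c.support_eq_cons, List.map_cons, List.tail_cons]
    refine List.Nodup.map_on ?_ hc.support_nodup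
    intro x hx y hy hxy
    exact hinj x (List.mem_of_mem_tail hx) y (List.mem_of_mem_tail hy) hxy

lemma length_rotate' {v u : V} {c : G.Walk v v} (h : u ∈ c.support) :
    (c.rotate u h).length = c.length := by
  have := congrArg Walk.length (c.take_spec h)
  rw [Walk.length_append] at this
  rw [Walk.rotate, Walk.length_append]
  omega

lemma mem_tail_of_mem_support_closed {v : V} {c : G.Walk v v} (hc : ¬c.Nil) {z : V}
    (hz : z ∈ c.support) : z ∈ c.support.tail := by
  cases c with
  | nil => simp at hc
  | cons h p =>
    rw [Walk.support_cons, List.tail_cons]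
    rw [Walk.support_cons, List.mem_cons] at hz
    rcases hz with rfl | hz
    · exact p.end_mem_support
    · exact hz

lemma mem_support_rotate_iff {v : V} {c : G.Walk v v} (hc : ¬c.Nil) {x z : V}
    (hx : x ∈ c.support) : z ∈ (c.rotate x hx).support ↔ z ∈ c.support := by
  have hperm := (Walk.support_rotate c x hx).perm
  have hc' : ¬(c.rotate x hx).Nil := by
    rw [Walk.not_nil_iff_lt_length] at hc ⊢
    rwa [length_rotate']
  constructor
  · intro hz
    exact List.mem_of_mem_tail (hperm.mem_iff.1 (mem_tail_of_mem_support_closed hc' hz))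
  · intro hz
    exact List.mem_of_mem_tail (hperm.mem_iff.2 (mem_tail_of_mem_support_closed hc hz))

lemma not_mem_both {x : V} {c : G.Walk x x} (hnd : c.support.tail.Nodup) {q z : V}
    (hq : q ∈ c.support)
    (h1 : z ∈ (c.takeUntil q hq).support) (h2 : z ∈ (c.dropUntil q hq).support)
    (hzx : z ≠ x) (hzq : z ≠ q) : False := by
  have htail : c.support.tail =
      (c.takeUntil q hq).support.tail ++ (c.dropUntil q hq).support.tail := by
    conv_lhs => rw [← c.take_spec hq]
    exact Walk.tail_support_append _ _
  rw [htail] at hnd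
  have hd := List.disjoint_of_nodup_append hnd
  have h1' : z ∈ (c.takeUntil q hq).support.tail := by
    rw [(c.takeUntil q hq).support_eq_cons, List.mem_cons] at h1
    exact h1.resolve_left hzx
  have h2' : z ∈ (c.dropUntil q hq).support.tail := by
    rw [(c.dropUntil q hq).support_eq_cons, List.mem_cons] at h2
    exact h2.resolve_left hzq
  exact hd h1' h2'

end Machinery
/-! ### Reachability in the punctured explorer-neighbourhood -/

section Pexpl

variable [DecidableEq V] {G : SimpleGraph V} {b₁ b₂ : V} {r : ℕ}

lemma adj_mem_explVerts {z w : EVert V} (h : (expl G b₁ b₂ r).Adj z w) :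
    z ∈ explVerts G b₁ b₂ r ∧ w ∈ explVerts G b₁ b₂ r := by
  rcases h with ⟨h1, h2, -⟩ | ⟨h1, h2, -⟩
  · exact ⟨Or.inl h1, Or.inl h2⟩
  · exact ⟨Or.inr h1, Or.inr h2⟩

lemma support_mem_explVerts {x y : EVert V} (W : (expl G b₁ b₂ r).Walk x y)
    (hne : ¬W.Nil) : ∀ z ∈ W.support, z ∈ explVerts G b₁ b₂ r := by
  induction W with
  | nil => simp at hne
  | @cons x w y h W ih =>
    intro z hz
    rw [Walk.support_cons, List.mem_cons] at hz
    rcases hz with rfl | hz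
    · exact (adj_mem_explVerts h).1
    · by_cases hWnil : W.Nil
      · cases W with
        | nil =>
          simp at hz
          subst hz
          exact (adj_mem_explVerts h).2
        | cons h' W' => simp at hWnil
      · exact ih hWnil z hz

lemma pexpl_adj {z w : EVert V} (hz : z ∈ pexplVerts G b₁ b₂ r)
    (hw : w ∈ pexplVerts G b₁ b₂ r) (h : (expl G b₁ b₂ r).Adj z w) :
    (pexpl G b₁ b₂ r).Adj ⟨z, hz⟩ ⟨w, hw⟩ := h

lemma pexpl_reachable_of_walk {x y : EVert V} (W : (expl G b₁ b₂ r).Walk x y)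
    (hx : x ∈ pexplVerts G b₁ b₂ r) (hy : y ∈ pexplVerts G b₁ b₂ r)
    (hall : ∀ z ∈ W.support, z.1 ≠ b₁ ∧ z.1 ≠ b₂) :
    (pexpl G b₁ b₂ r).Reachable ⟨x, hx⟩ ⟨y, hy⟩ := by
  induction W with
  | nil => exact Reachable.refl _
  | @cons x w y h W ih =>
    have hwmem : w ∈ pexplVerts G b₁ b₂ r := by
      refine ⟨(adj_mem_explVerts h).2, ?_, ?_⟩
      · exact (hall w (by rw [Walk.support_cons]; exact List.mem_cons_of_mem _ W.start_mem_support)).1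
      · exact (hall w (by rw [Walk.support_cons]; exact List.mem_cons_of_mem _ W.start_mem_support)).2
    refine (pexpl_adj hx hwmem h).reachable.trans (ih hwmem hy fun z hz => ?_)
    exact hall z (by rw [Walk.support_cons]; exact List.mem_cons_of_mem _ hz)

lemma reach_or_split {x y : EVert V} (W : (expl G b₁ b₂ r).Walk x y)
    (hx : x ∈ pexplVerts G b₁ b₂ r) (hy : y ∈ pexplVerts G b₁ b₂ r) :
    (pexpl G b₁ b₂ r).Reachable ⟨x, hx⟩ ⟨y, hy⟩ ∨
    ∃ (z : EVert V) (F : (expl G b₁ b₂ r).Walk x z) (B : (expl G b₁ b₂ r).Walk z y),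
      W = F.append B ∧ z ∈ explVerts G b₁ b₂ r ∧ (z.1 = b₁ ∨ z.1 = b₂) := by
  induction W with
  | nil => exact Or.inl (Reachable.refl _)
  | @cons x w y h W ih =>
    by_cases hw : w.1 = b₁ ∨ w.1 = b₂
    · refine Or.inr ⟨w, Walk.cons h Walk.nil, W, by simp, (adj_mem_explVerts h).2, hw⟩
    · push_neg at hw
      have hwmem : w ∈ pexplVerts G b₁ b₂ r := ⟨(adj_mem_explVerts h).2, hw.1, hw.2⟩
      rcases ih hwmem hy with hreach | ⟨z, F, B, hWFB, hzE, hz1⟩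
      · exact Or.inl ((pexpl_adj hx hwmem h).reachable.trans hreach)
      · exact Or.inr ⟨z, Walk.cons h F, B, by rw [Walk.cons_append, hWFB], hzE, hz1⟩

lemma pexpl_reach_cast {x x' y y' : EVert V} (hx : x ∈ pexplVerts G b₁ b₂ r)
    (hy : y ∈ pexplVerts G b₁ b₂ r) (hx' : x' ∈ pexplVerts G b₁ b₂ r)
    (hy' : y' ∈ pexplVerts G b₁ b₂ r) (ex : x = x') (ey : y = y') :
    (pexpl G b₁ b₂ r).Reachable ⟨x, hx⟩ ⟨y, hy⟩ →
      (pexpl G b₁ b₂ r).Reachable ⟨x', hx'⟩ ⟨y', hy'⟩ := by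
  subst ex; subst ey; exact id

/-- Lifting a walk in a ball around `b ∈ {b₁, b₂}` which avoids `b₁`, `b₂` into the punctured
explorer-neighbourhood. -/
lemma pexpl_reach_of_walk_avoiding {b : V} {f : V → Set (List V)}
    (hf : ∀ {u v : V}, (ball G b r).Adj u v → (expl G b₁ b₂ r).Adj (u, f u) (v, f v)) :
    ∀ {x y : V} (P : G.Walk x y), WalkIn (ball G b r) P →
      b₁ ∉ P.support → b₂ ∉ P.support →
      ∀ (hx : (x, f x) ∈ pexplVerts G b₁ b₂ r) (hy : (y, f y) ∈ pexplVerts G b₁ b₂ r),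
      (pexpl G b₁ b₂ r).Reachable ⟨(x, f x), hx⟩ ⟨(y, f y), hy⟩ := by
  intro x y P
  induction P with
  | nil => intro _ _ _ hx hy; exact Reachable.refl _
  | @cons x w y h P ih =>
    intro hPin h1 h2 hx hy
    rw [Walk.support_cons, List.mem_cons] at h1 h2
    push_neg at h1 h2
    have hadj : (expl G b₁ b₂ r).Adj (x, f x) (w, f w) := hf hPin.adj_of_cons
    have hwmem : (w, f w) ∈ pexplVerts G b₁ b₂ r := by
      refine ⟨(adj_mem_explVerts hadj).2, ?_, ?_⟩
      · exact fun hc => h1.2 (hc ▸ P.start_mem_support)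
      · exact fun hc => h2.2 (hc ▸ P.start_mem_support)
    exact (pexpl_adj hx hwmem hadj).reachable.trans (ih hPin.of_cons h1.2 h2.2 hwmem hy)

end Pexpl
/-! ### Analysis of the crossing cycle -/

section Crossing

variable [DecidableEq V] {G : SimpleGraph V} {r : ℕ} {b₁ b₂ : V}

noncomputable local instance : DecidableEq (EVert V) := Classical.decEq _

lemma crossing_arcs
    (hbb : G.Reachable b₁ b₂) (hDr : 2 * G.dist b₁ b₂ ≤ r)
    {p q : EVert V}
    (hp : p ∈ pexplVerts G b₁ b₂ r) (hq : q ∈ pexplVerts G b₁ b₂ r)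
    (hsep : ¬ (pexpl G b₁ b₂ r).Reachable ⟨p, hp⟩ ⟨q, hq⟩)
    {u₀ : EVert V} {C : (expl G b₁ b₂ r).Walk u₀ u₀} (hC : C.IsCycle) (hCr : C.length ≤ r)
    (hpC : p ∈ C.support) (hqC : q ∈ C.support) :
    (scopy G b₁ b₂ r b₁ ∈ C.support ∧ scopy G b₁ b₂ r b₂ ∈ C.support) ∧
    (G.dist b₁ p.1 + G.dist b₂ p.1 + G.dist b₁ b₂ ≤ r) ∧
    (G.dist b₁ q.1 + G.dist b₂ q.1 + G.dist b₁ b₂ ≤ r) := by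
  have h3 := hC.three_le_length
  have hCnil : ¬C.Nil := by rw [Walk.not_nil_iff_lt_length]; omega
  set W := C.rotate p hpC with hWdef
  have hWcyc : W.IsCycle := hC.rotate hpC
  have hWlen : W.length = C.length := length_rotate' hpC
  have hWnil : ¬W.Nil := by rw [Walk.not_nil_iff_lt_length, hWlen]; omega
  have hqW : q ∈ W.support := (mem_support_rotate_iff hCnil hpC).2 hqC
  have hlen12 : (W.takeUntil q hqW).length + (W.dropUntil q hqW).length = W.length := by
    have := congrArg Walk.length (W.take_spec hqW)
    rwa [Walk.length_append] at this
  rcases reach_or_split (W.takeUntil q hqW) hp hq with hreach | ⟨za, F₁, B₁, hsplit₁, hzaE, hza1⟩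
  · exact absurd hreach hsep
  rcases reach_or_split (W.dropUntil q hqW) hq hp with hreach | ⟨zb, F₂, B₂, hsplit₂, hzbE, hzb1⟩
  · exact absurd hreach.symm hsep
  have hzaP₁ : za ∈ (W.takeUntil q hqW).support := by
    rw [hsplit₁, Walk.mem_support_append_iff]; exact Or.inl F₁.end_mem_support
  have hzbP₂ : zb ∈ (W.dropUntil q hqW).support := by
    rw [hsplit₂, Walk.mem_support_append_iff]; exact Or.inl F₂.end_mem_support
  have hzap : za ≠ p := by
    intro h; subst h
    rcases hza1 with h1 | h1
    exacts [hp.2.1 h1, hp.2.2 h1]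
  have hzaq : za ≠ q := by
    intro h; subst h
    rcases hza1 with h1 | h1
    exacts [hq.2.1 h1, hq.2.2 h1]
  have hzbp : zb ≠ p := by
    intro h; subst h
    rcases hzb1 with h1 | h1
    exacts [hp.2.1 h1, hp.2.2 h1]
  have hzbq : zb ≠ q := by
    intro h; subst h
    rcases hzb1 with h1 | h1
    exacts [hq.2.1 h1, hq.2.2 h1]
  have hzne : za ≠ zb := by
    intro h
    exact not_mem_both hWcyc.support_nodup hqW hzaP₁ (h ▸ hzbP₂) hzap hzaq
  -- membership in C
  have hzaC : za ∈ C.support :=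
    (mem_support_rotate_iff hCnil hpC).1 ((Walk.support_takeUntil_subset W hqW) hzaP₁)
  have hzbC : zb ∈ C.support :=
    (mem_support_rotate_iff hCnil hpC).1 ((Walk.support_dropUntil_subset W hqW) hzbP₂)
  -- lengths
  have hlF₁ : F₁.length + B₁.length = (W.takeUntil q hqW).length := by
    have := congrArg Walk.length hsplit₁
    rw [Walk.length_append] at this
    omega
  have hlF₂ : F₂.length + B₂.length = (W.dropUntil q hqW).length := by
    have := congrArg Walk.length hsplit₂
    rw [Walk.length_append] at this
    omega
  -- distances
  have d1 : G.dist p.1 za.1 ≤ F₁.length := dist_fst_le F₁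
  have d2 : G.dist za.1 q.1 ≤ B₁.length := dist_fst_le B₁
  have d3 : G.dist q.1 zb.1 ≤ F₂.length := dist_fst_le F₂
  have d4 : G.dist zb.1 p.1 ≤ B₂.length := dist_fst_le B₂
  have d5 : G.dist za.1 zb.1 ≤ B₁.length + F₂.length := by
    have := dist_fst_le (B₁.append F₂)
    rwa [Walk.length_append] at this
  have d6 : G.dist zb.1 za.1 ≤ B₂.length + F₁.length := by
    have := dist_fst_le (B₂.append F₁)
    rwa [Walk.length_append] at this
  have cpb1 : G.dist p.1 b₁ = G.dist b₁ p.1 := SimpleGraph.dist_comm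
  have cpb2 : G.dist p.1 b₂ = G.dist b₂ p.1 := SimpleGraph.dist_comm
  have cqb1 : G.dist q.1 b₁ = G.dist b₁ q.1 := SimpleGraph.dist_comm
  have cqb2 : G.dist q.1 b₂ = G.dist b₂ q.1 := SimpleGraph.dist_comm
  have cbb : G.dist b₂ b₁ = G.dist b₁ b₂ := SimpleGraph.dist_comm
  have cb1p : G.dist b₁ p.1 = G.dist p.1 b₁ := SimpleGraph.dist_comm
  rcases hza1 with h1 | h1 <;> rcases hzb1 with h2 | h2
  · -- za.1 = b₁, zb.1 = b₁ : impossible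
    exact absurd ((scopy_b₁ hbb hDr hzaE h1).trans (scopy_b₁ hbb hDr hzbE h2).symm) hzne
  · -- za.1 = b₁, zb.1 = b₂
    rw [h1] at d1 d2 d5 d6
    rw [h2] at d4 d5 d6
    refine ⟨⟨(scopy_b₁ hbb hDr hzaE h1) ▸ hzaC, (scopy_b₂ hbb hDr hzbE h2) ▸ hzbC⟩, ?_, ?_⟩
    · omega
    · rw [h2] at d3
      omega
  · -- za.1 = b₂, zb.1 = b₁
    rw [h1] at d1 d2 d5 d6
    rw [h2] at d4 d5 d6
    refine ⟨⟨(scopy_b₁ hbb hDr hzbE h2) ▸ hzbC, (scopy_b₂ hbb hDr hzaE h1) ▸ hzaC⟩, ?_, ?_⟩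
    · omega
    · rw [h2] at d3
      omega
  · exact absurd ((scopy_b₂ hbb hDr hzaE h1).trans (scopy_b₂ hbb hDr hzbE h2).symm) hzne

lemma cycle_all_metric
    {u₀ : EVert V} {C : (expl G b₁ b₂ r).Walk u₀ u₀} (hC : C.IsCycle) (hCr : C.length ≤ r)
    {za zb : EVert V} (hzaC : za ∈ C.support) (hzbC : zb ∈ C.support)
    (h1 : za.1 = b₁) (h2 : zb.1 = b₂) :
    ∀ z ∈ C.support, G.dist b₁ z.1 + G.dist b₂ z.1 + G.dist b₁ b₂ ≤ r := by
  intro z hz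
  have h3 := hC.three_le_length
  have hCnil : ¬C.Nil := by rw [Walk.not_nil_iff_lt_length]; omega
  set W := C.rotate za hzaC with hWdef
  have hWlen : W.length = C.length := length_rotate' hzaC
  have hzbW : zb ∈ W.support := (mem_support_rotate_iff hCnil hzaC).2 hzbC
  have hzW : z ∈ W.support := (mem_support_rotate_iff hCnil hzaC).2 hz
  have hlen12 : (W.takeUntil zb hzbW).length + (W.dropUntil zb hzbW).length = W.length := by
    have := congrArg Walk.length (W.take_spec hzbW)
    rwa [Walk.length_append] at this
  have hDS₂ : G.dist zb.1 za.1 ≤ (W.dropUntil zb hzbW).length := dist_fst_le _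
  have hDS₁ : G.dist za.1 zb.1 ≤ (W.takeUntil zb hzbW).length := dist_fst_le _
  rw [h1, h2] at hDS₂ hDS₁
  have cbb : G.dist b₂ b₁ = G.dist b₁ b₂ := SimpleGraph.dist_comm
  have hz12 : z ∈ (W.takeUntil zb hzbW).support ∨ z ∈ (W.dropUntil zb hzbW).support := by
    rw [← Walk.mem_support_append_iff, W.take_spec hzbW]
    exact hzW
  rcases hz12 with hzS | hzS
  · set S := W.takeUntil zb hzbW
    have hF : G.dist za.1 z.1 ≤ (S.takeUntil z hzS).length := dist_fst_le _
    have hB : G.dist z.1 zb.1 ≤ (S.dropUntil z hzS).length := dist_fst_le _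
    have hFB : (S.takeUntil z hzS).length + (S.dropUntil z hzS).length = S.length := by
      have := congrArg Walk.length (S.take_spec hzS)
      rwa [Walk.length_append] at this
    rw [h1] at hF
    rw [h2] at hB
    have c1 : G.dist z.1 b₂ = G.dist b₂ z.1 := SimpleGraph.dist_comm
    omega
  · set S := W.dropUntil zb hzbW
    have hF : G.dist zb.1 z.1 ≤ (S.takeUntil z hzS).length := dist_fst_le _
    have hB : G.dist z.1 za.1 ≤ (S.dropUntil z hzS).length := dist_fst_le _
    have hFB : (S.takeUntil z hzS).length + (S.dropUntil z hzS).length = S.length := by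
      have := congrArg Walk.length (S.take_spec hzS)
      rwa [Walk.length_append] at this
    rw [h2] at hF
    rw [h1] at hB
    have c1 : G.dist z.1 b₁ = G.dist b₁ z.1 := SimpleGraph.dist_comm
    omega

end Crossing
/-! ### The main argument -/

section Main

variable [DecidableEq V] {G : SimpleGraph V} {r : ℕ} {b₁ b₂ : V}

lemma arc_gives_reach (hbb : G.Reachable b₁ b₂)
    {b : V} (hbor : b = b₁ ∨ b = b₂)
    {x y : V} (P : G.Walk x y) (hPin : WalkIn (ball G b r) P)
    (hb1 : b₁ ∉ P.support) (hb2 : b₂ ∉ P.support)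
    (hxs : G.dist b₁ x + G.dist b₂ x + G.dist b₁ b₂ ≤ r)
    (hys : G.dist b₁ y + G.dist b₂ y + G.dist b₁ b₂ ≤ r)
    (hx : scopy G b₁ b₂ r x ∈ pexplVerts G b₁ b₂ r)
    (hy : scopy G b₁ b₂ r y ∈ pexplVerts G b₁ b₂ r) :
    (pexpl G b₁ b₂ r).Reachable ⟨scopy G b₁ b₂ r x, hx⟩ ⟨scopy G b₁ b₂ r y, hy⟩ := by
  rcases hbor with rfl | rfl
  · exact pexpl_reach_of_walk_avoiding
      (f := fun u => labelIn G (ball G b r) (core G b b₂) u)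
      (fun h => Or.inl ⟨⟨h.2.1, rfl⟩, ⟨h.2.2.1, rfl⟩, h⟩) P hPin hb1 hb2 hx hy
  · -- the ball around b₂; identify the copies
    have hxball : x ∈ ballVerts G b r := by
      have := hPin.1 P.start_mem_verts_toSubgraph
      exact this
    have hyball : y ∈ ballVerts G b r := by
      have := hPin.1 P.end_mem_verts_toSubgraph
      exact this
    have h2x : G.Reachable b x := hxball.1
    have h2y : G.Reachable b y := hyball.1
    have h1x : G.Reachable b₁ x := hbb.trans h2x
    have h1y : G.Reachable b₁ y := hbb.trans h2y
    have ex : (x, labelIn G (ball G b r) (core G b₁ b) x) = scopy G b₁ b r x :=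
      Prod.ext rfl (labelIn_ball_comm hbb h1x h2x hxs).symm
    have ey : (y, labelIn G (ball G b r) (core G b₁ b) y) = scopy G b₁ b r y :=
      Prod.ext rfl (labelIn_ball_comm hbb h1y h2y hys).symm
    have hx2 : (x, labelIn G (ball G b r) (core G b₁ b) x) ∈ pexplVerts G b₁ b r := by
      rw [ex]; exact hx
    have hy2 : (y, labelIn G (ball G b r) (core G b₁ b) y) ∈ pexplVerts G b₁ b r := by
      rw [ey]; exact hy
    refine pexpl_reach_cast hx2 hy2 hx hy ex ey ?_
    exact pexpl_reach_of_walk_avoiding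
      (f := fun u => labelIn G (ball G b r) (core G b₁ b) u)
      (fun h => Or.inr ⟨⟨h.2.1, rfl⟩, ⟨h.2.2.1, rfl⟩, h⟩) P hPin hb1 hb2 hx2 hy2

lemma alt_of_cycle
    (hbne : b₁ ≠ b₂) (hbb : G.Reachable b₁ b₂) (hDr : 2 * G.dist b₁ b₂ ≤ r)
    {a₁ a₂ : V}
    {p q : EVert V} (hp1 : p.1 = a₁) (hq1 : q.1 = a₂)
    (hp : p ∈ pexplVerts G b₁ b₂ r) (hq : q ∈ pexplVerts G b₁ b₂ r)
    (hsep : ¬ (pexpl G b₁ b₂ r).Reachable ⟨p, hp⟩ ⟨q, hq⟩)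
    (M1 : G.dist b₁ a₁ + G.dist b₂ a₁ + G.dist b₁ b₂ ≤ r)
    (M2 : G.dist b₁ a₂ + G.dist b₂ a₂ + G.dist b₁ b₂ ≤ r) :
    ∀ (u : V) (c : G.Walk u u), c.IsCycle → c.length ≤ r →
      ∀ h₁ : a₁ ∈ c.support, a₂ ∈ c.support → (b₁ ∈ c.support ∨ b₂ ∈ c.support) →
        AltCycle G a₁ a₂ b₁ b₂ (c.rotate a₁ h₁) := by
  have hpcopy : p = scopy G b₁ b₂ r a₁ := copy_eq hbb hp.1 hp1 M1
  have hqcopy : q = scopy G b₁ b₂ r a₂ := copy_eq hbb hq.1 hq1 M2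
  have hxmem : scopy G b₁ b₂ r a₁ ∈ pexplVerts G b₁ b₂ r := hpcopy ▸ hp
  have hymem : scopy G b₁ b₂ r a₂ ∈ pexplVerts G b₁ b₂ r := hqcopy ▸ hq
  have hb1a1 : b₁ ≠ a₁ := fun h => hp.2.1 (by rw [hp1, h])
  have hb2a1 : b₂ ≠ a₁ := fun h => hp.2.2 (by rw [hp1, h])
  have hb1a2 : b₁ ≠ a₂ := fun h => hq.2.1 (by rw [hq1, h])
  have hb2a2 : b₂ ≠ a₂ := fun h => hq.2.2 (by rw [hq1, h])
  intro u c hc hlen h₁ h₂ hb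
  have h3 := hc.three_le_length
  have hcnil : ¬c.Nil := by rw [Walk.not_nil_iff_lt_length]; omega
  have hce : (c.rotate a₁ h₁).IsCycle := hc.rotate h₁
  have helen : (c.rotate a₁ h₁).length = c.length := length_rotate' h₁
  have h₂e : a₂ ∈ (c.rotate a₁ h₁).support := (mem_support_rotate_iff hcnil h₁).2 h₂
  obtain ⟨b, hbor, hbe⟩ : ∃ b, (b = b₁ ∨ b = b₂) ∧ b ∈ (c.rotate a₁ h₁).support := by
    rcases hb with h | h
    exacts [⟨b₁, Or.inl rfl, (mem_support_rotate_iff hcnil h₁).2 h⟩,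
            ⟨b₂, Or.inr rfl, (mem_support_rotate_iff hcnil h₁).2 h⟩]
  have hwin : WalkIn (ball G b r) (c.rotate a₁ h₁) := by
    have h0 : WalkIn (ball G b r) ((c.rotate a₁ h₁).rotate b hbe) :=
      walkIn_ball b r _ 0 (Reachable.refl b) (by simp)
        (by rw [SimpleGraph.dist_self, length_rotate', helen]; omega)
    unfold WalkIn at h0 ⊢
    rwa [Walk.toSubgraph_rotate] at h0
  have hPQ : ((c.rotate a₁ h₁).takeUntil a₂ h₂e).append ((c.rotate a₁ h₁).dropUntil a₂ h₂e) =
      c.rotate a₁ h₁ := (c.rotate a₁ h₁).take_spec h₂e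
  have hwin' : WalkIn (ball G b r)
      (((c.rotate a₁ h₁).takeUntil a₂ h₂e).append ((c.rotate a₁ h₁).dropUntil a₂ h₂e)) := by
    rwa [hPQ]
  have claimP : b₁ ∈ ((c.rotate a₁ h₁).takeUntil a₂ h₂e).support ∨
      b₂ ∈ ((c.rotate a₁ h₁).takeUntil a₂ h₂e).support := by
    by_contra hcon
    push_neg at hcon
    exact hsep (pexpl_reach_cast hxmem hymem hp hq hpcopy.symm hqcopy.symm
      (arc_gives_reach hbb hbor _ hwin'.of_append_left hcon.1 hcon.2 M1 M2 hxmem hymem))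
  have claimQ : b₁ ∈ ((c.rotate a₁ h₁).dropUntil a₂ h₂e).support ∨
      b₂ ∈ ((c.rotate a₁ h₁).dropUntil a₂ h₂e).support := by
    by_contra hcon
    push_neg at hcon
    exact hsep ((pexpl_reach_cast hymem hxmem hq hp hqcopy.symm hpcopy.symm
      (arc_gives_reach hbb hbor _ hwin'.of_append_right hcon.1 hcon.2 M2 M1 hymem hxmem)).symm)
  have hb1set : b₁ ∉ ({a₁, a₂} : Set V) := by
    simp only [Set.mem_insert_iff, Set.mem_singleton_iff]
    push_neg
    exact ⟨hb1a1, hb1a2⟩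
  have hb2set : b₂ ∉ ({a₁, a₂} : Set V) := by
    simp only [Set.mem_insert_iff, Set.mem_singleton_iff]
    push_neg
    exact ⟨hb2a1, hb2a2⟩
  refine ⟨hce, hbne, hb1set, hb2set, (c.rotate a₁ h₁).takeUntil a₂ h₂e,
    (c.rotate a₁ h₁).dropUntil a₂ h₂e, hPQ.symm, ?_⟩
  rcases claimP with hP | hP <;> rcases claimQ with hQ | hQ
  · exact absurd (not_mem_both hce.support_nodup h₂e hP hQ hb1a1 hb1a2) not_false
  · exact Or.inl ⟨hP, hQ⟩
  · exact Or.inr ⟨hP, hQ⟩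
  · exact absurd (not_mem_both hce.support_nodup h₂e hP hQ hb2a1 hb2a2) not_false

end Main
/-- Alternating Cycle Lemma: if an `r`-local 2-separator `{a₁,a₂}` crosses an `r`-local
2-separator `{b₁,b₂}`, then there is a cycle of `G` of length at most `r` alternating between
them; moreover, any cycle of `G` of length at most `r` through `a₁` and `a₂` containing `b₁`
or `b₂` alternates between the two local 2-separators. -/
theorem stmt10 {V : Type u} [DecidableEq V] (G : SimpleGraph V) (r : ℕ) (a₁ a₂ b₁ b₂ : V)
    (hA : IsLocalTwoSep G r a₁ a₂) (hB : IsLocalTwoSep G r b₁ b₂)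
    (hX : Crosses G r a₁ a₂ b₁ b₂) :
    (∃ c : G.Walk a₁ a₁, AltCycle G a₁ a₂ b₁ b₂ c ∧ c.length ≤ r) ∧
    (∀ (u : V) (c : G.Walk u u), c.IsCycle → c.length ≤ r →
      ∀ h₁ : a₁ ∈ c.support, a₂ ∈ c.support → (b₁ ∈ c.support ∨ b₂ ∈ c.support) →
        AltCycle G a₁ a₂ b₁ b₂ (c.rotate a₁ h₁)) := by
  letI : DecidableEq (EVert V) := Classical.decEq _
  obtain ⟨hbne, hbb, hDr, -⟩ := hB
  obtain ⟨p, q, hp1, hq1, hp, hq, hsep, u₀, C, hC, hCr, hpC, hqC, -⟩ := hX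
  obtain ⟨⟨hβ₁C, hβ₂C⟩, M1', M2'⟩ := crossing_arcs hbb hDr hp hq hsep hC hCr hpC hqC
  rw [hp1] at M1'
  rw [hq1] at M2'
  have part2 := alt_of_cycle hbne hbb hDr hp1 hq1 hp hq hsep M1' M2'
  refine ⟨?_, part2⟩
  -- Part 1: project the crossing cycle to `G` and apply Part 2.
  have h3 := hC.three_le_length
  have hCnil : ¬C.Nil := by rw [Walk.not_nil_iff_lt_length]; omega
  have hallM := cycle_all_metric hC hCr hβ₁C hβ₂C rfl rfl
  have hallE := support_mem_explVerts C hCnil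
  have hshared : ∀ z ∈ C.support, z = scopy G b₁ b₂ r z.1 :=
    fun z hz => copy_eq hbb (hallE z hz) rfl (hallM z hz)
  have hπ : (C.map (projHom G b₁ b₂ r)).IsCycle := by
    refine isCycle_map_of_injOn _ hC (fun x hx y hy hxy => ?_)
    have hxy' : x.1 = y.1 := hxy
    rw [hshared x hx, hshared y hy, hxy']
  have hπlen : (C.map (projHom G b₁ b₂ r)).length ≤ r := by
    rw [Walk.length_map]; exact hCr
  have hmem₁ : a₁ ∈ (C.map (projHom G b₁ b₂ r)).support := by
    rw [Walk.support_map]; exact List.mem_map.2 ⟨p, hpC, hp1⟩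
  have hmem₂ : a₂ ∈ (C.map (projHom G b₁ b₂ r)).support := by
    rw [Walk.support_map]; exact List.mem_map.2 ⟨q, hqC, hq1⟩
  have hmemb : b₁ ∈ (C.map (projHom G b₁ b₂ r)).support := by
    rw [Walk.support_map]; exact List.mem_map.2 ⟨scopy G b₁ b₂ r b₁, hβ₁C, rfl⟩
  refine ⟨(C.map (projHom G b₁ b₂ r)).rotate a₁ hmem₁,
    part2 _ _ hπ hπlen hmem₁ hmem₂ (Or.inl hmemb), ?_⟩
  rw [length_rotate']
  exact hπlen

end LocalSep
end

section
/- Let G' be obtained from a graph G by r-locally cutting a vertex v, and let w be another vertex. Two neighbours x and y of w lie in the same connected component of B_{r/2}(w) - w (computed in G) if and only if they lie in the same connected component of B'_{r/2}(w) - w (computed in G'). -/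
open SimpleGraph

universe u

namespace LocalSep

variable {V : Type u}

/-- The punctured ball `B_{r/2}(v) - v` as a simple graph. -/
def pBallG {V : Type u} (G : SimpleGraph V) (r : ℕ) (v : V) :=
  ((ball G v r).deleteVerts {v}).coe

/-- The set of components of the punctured ball `B_{r/2}(v) - v`. -/
abbrev VComp {V : Type u} (G : SimpleGraph V) (r : ℕ) (v : V) :=
  (pBallG G r v).ConnectedComponent

/-- The vertices of the graph obtained from `G` by `r`-locally cutting the vertex `v`:
the vertices other than `v`, together with one slice of `v` for each component of the
punctured ball `B_{r/2}(v) - v`. -/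
def VCutVert {V : Type u} (G : SimpleGraph V) (r : ℕ) (v : V) :=
  {u : V // u ≠ v} ⊕ VComp G r v

/-- One-sided adjacency of the graph obtained by `r`-locally cutting the vertex `v`:
the slice for a component `c` inherits exactly the edges of `v` whose other endvertex lies
in `c`. -/
def vcutAux {V : Type u} (G : SimpleGraph V) (r : ℕ) (v : V) :
    VCutVert G r v → VCutVert G r v → Prop
  | Sum.inl u, Sum.inl u' => G.Adj u.1 u'.1
  | Sum.inl u, Sum.inr c => G.Adj v u.1 ∧
      ∃ h : u.1 ∈ ((ball G v r).deleteVerts {v}).verts,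
        (pBallG G r v).connectedComponentMk ⟨u.1, h⟩ = c
  | _, _ => False

/-- The graph obtained from `G` by `r`-locally cutting the vertex `v`. -/
def vertexCut {V : Type u} (G : SimpleGraph V) (r : ℕ) (v : V) :
    SimpleGraph (VCutVert G r v) where
  Adj x y := vcutAux G r v x y ∨ vcutAux G r v y x
  symm := ⟨fun x y h => h.symm⟩
  loopless := by
    refine ⟨?_⟩
    intro x h
    have h' : vcutAux G r v x x := h.elim id id
    rcases x with u | c
    · exact G.loopless.irrefl _ h'
    · exact h'.elim

/-- `x'` is the copy in the cut graph of the neighbour `x` of `w`: either `x ≠ v` and `x'` is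
the corresponding ordinary vertex, or `x = v` and `x'` is the unique slice of `v` adjacent to
`w`. -/
def IsCopyNear {V : Type u} (G : SimpleGraph V) (r : ℕ) (v w : V) (hwv : w ≠ v)
    (x : V) (x' : VCutVert G r v) : Prop :=
  (∃ h : x ≠ v, x' = Sum.inl ⟨x, h⟩) ∨
    (x = v ∧ (∃ c, x' = Sum.inr c) ∧ (vertexCut G r v).Adj x' (Sum.inl ⟨w, hwv⟩))

/-! ### Auxiliary development for stmt18 -/

section Aux

variable {G : SimpleGraph V} {r : ℕ} {w v : V}

lemma mem_pballVerts {a : V} :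
    a ∈ ((ball G w r).deleteVerts {w}).verts ↔
      (G.Reachable w a ∧ G.dist w a ≤ r / 2) ∧ a ≠ w := by
  rw [SimpleGraph.Subgraph.deleteVerts_verts]
  simp [ball, ballVerts]

/-- A triangle inequality for `SimpleGraph.dist` under reachability hypotheses. -/
lemma dist_tri {a b c : V} (h1 : G.Reachable a b) (h2 : G.Reachable b c) :
    G.dist a c ≤ G.dist a b + G.dist b c := by
  obtain ⟨p, hp⟩ := h1.exists_walk_length_eq_dist
  obtain ⟨q, hq⟩ := h2.exists_walk_length_eq_dist
  calc G.dist a c ≤ (p.append q).length := SimpleGraph.dist_le _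
    _ = _ := by rw [SimpleGraph.Walk.length_append, hp, hq]

/-- Working predicate: a walk lies in the ball `B_{r/2}(w)` of `G`. -/
def BW (G : SimpleGraph V) (w : V) (r : ℕ) {a b : V} (q : G.Walk a b) : Prop :=
  (∀ c ∈ q.support, G.Reachable w c ∧ G.dist w c ≤ r / 2) ∧
  (∀ a' b', s(a', b') ∈ q.edges → Even r →
    ¬(G.dist w a' = r / 2 ∧ G.dist w b' = r / 2))

lemma BW.mono {a b a' b' : V} {q : G.Walk a b} {q' : G.Walk a' b'}
    (h : BW G w r q) (hs : q'.support ⊆ q.support) (he : q'.edges ⊆ q.edges) :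
    BW G w r q' :=
  ⟨fun c hc => h.1 c (hs hc), fun x y hxy => h.2 x y (he hxy)⟩

lemma BW.reverse {a b : V} {q : G.Walk a b} (h : BW G w r q) : BW G w r q.reverse :=
  h.mono (by simp [SimpleGraph.Walk.support_reverse])
    (by intro e he; rw [SimpleGraph.Walk.edges_reverse, List.mem_reverse] at he; exact he)

lemma BW.append {a b c : V} {q : G.Walk a b} {q' : G.Walk b c}
    (h : BW G w r q) (h' : BW G w r q') : BW G w r (q.append q') := by
  constructor
  · intro z hz
    rw [SimpleGraph.Walk.mem_support_append_iff] at hz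
    exact hz.elim (h.1 z) (h'.1 z)
  · intro x y hxy
    rw [SimpleGraph.Walk.edges_append, List.mem_append] at hxy
    exact hxy.elim (h.2 x y) (h'.2 x y)

lemma BW.of_cons {a b c : V} {h : G.Adj a b} {q : G.Walk b c}
    (hq : BW G w r (q.cons h)) : BW G w r q :=
  hq.mono (by simp) (by rw [SimpleGraph.Walk.edges_cons]; exact fun e he => List.mem_cons_of_mem _ he)

lemma BW.cons {a b c : V} {h : G.Adj a b} {q : G.Walk b c}
    (hq : BW G w r q) (ha1 : G.Reachable w a) (ha2 : G.dist w a ≤ r / 2)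
    (hev : Even r → ¬(G.dist w a = r / 2 ∧ G.dist w b = r / 2)) :
    BW G w r (q.cons h) := by
  constructor
  · intro z hz
    rw [SimpleGraph.Walk.support_cons, List.mem_cons] at hz
    rcases hz with rfl | hz
    · exact ⟨ha1, ha2⟩
    · exact hq.1 z hz
  · intro x y hxy
    rw [SimpleGraph.Walk.edges_cons, List.mem_cons] at hxy
    rcases hxy with hxy | hxy
    · rw [Sym2.eq_iff] at hxy
      rcases hxy with ⟨rfl, rfl⟩ | ⟨rfl, rfl⟩
      · exact hev
      · intro he hc; exact hev he ⟨hc.2, hc.1⟩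
    · exact hq.2 x y hxy

lemma BW.head_mem {a b : V} {q : G.Walk a b} (h : BW G w r q) :
    G.Reachable w a ∧ G.dist w a ≤ r / 2 := h.1 a q.start_mem_support

lemma BW.end_mem {a b : V} {q : G.Walk a b} (h : BW G w r q) :
    G.Reachable w b ∧ G.dist w b ≤ r / 2 := h.1 b q.end_mem_support

lemma BW.single {y : V} (hs : 1 ≤ r / 2) (hy : G.Adj w y) :
    BW G w r (SimpleGraph.Walk.cons hy.symm (SimpleGraph.Walk.nil' w)) := by
  have hd : G.dist w y ≤ 1 := by
    have := SimpleGraph.dist_le (SimpleGraph.Walk.cons hy (SimpleGraph.Walk.nil' y))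
    simpa using this
  have hnil : BW G w r (SimpleGraph.Walk.nil' w) := by
    refine ⟨?_, by simp⟩
    intro c hc
    simp only [SimpleGraph.Walk.support_nil, List.mem_singleton] at hc
    subst hc
    exact ⟨SimpleGraph.Reachable.refl _, by simp [SimpleGraph.dist_self]⟩
  refine hnil.cons hy.reachable (le_trans hd hs) ?_
  rintro _ ⟨_, h2⟩
  rw [SimpleGraph.dist_self] at h2
  omega

/-- Project a walk of the punctured ball (as coe graph) to a `BW` walk of the ambient graph. -/
lemma bw_of_pballWalk {A B : ((ball G w r).deleteVerts {w}).verts}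
    (P : (pBallG G r w).Walk A B) :
    ∃ q : G.Walk A.1 B.1, BW G w r q ∧ w ∉ q.support := by
  induction P with
  | nil =>
    rename_i A
    obtain ⟨hA1, hA2⟩ := mem_pballVerts.mp A.2
    exact ⟨SimpleGraph.Walk.nil,
      ⟨by intro c hc; simp only [SimpleGraph.Walk.support_nil, List.mem_singleton] at hc;
          subst hc; exact hA1, by simp⟩,
      by simp only [SimpleGraph.Walk.support_nil, List.mem_singleton]; exact fun h => hA2 h.symm⟩
  | @cons A C _ h P ih =>
    obtain ⟨q, hq, hwq⟩ := ih
    have h' : ((ball G w r).deleteVerts {w}).Adj A.1 C.1 := h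
    rw [SimpleGraph.Subgraph.deleteVerts_adj] at h'
    obtain ⟨_, hA, _, hC, hadj⟩ := h'
    refine ⟨q.cons hadj.1, hq.cons hadj.2.1.1 hadj.2.1.2 hadj.2.2.2, ?_⟩
    rw [SimpleGraph.Walk.support_cons, List.mem_cons]
    rintro (h1 | h1)
    · exact hA (by simp [h1.symm])
    · exact hwq h1

/-- Lift a `BW` walk avoiding `w` to the punctured ball. -/
lemma pballReach_of_bw {a b : V} (q : G.Walk a b) (hq : BW G w r q) (hw : w ∉ q.support) :
    ∃ (hA : a ∈ ((ball G w r).deleteVerts {w}).verts)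
      (hB : b ∈ ((ball G w r).deleteVerts {w}).verts),
      (pBallG G r w).Reachable ⟨a, hA⟩ ⟨b, hB⟩ := by
  induction q with
  | nil =>
    rename_i a
    have ha : a ∈ ((ball G w r).deleteVerts {w}).verts :=
      mem_pballVerts.mpr ⟨hq.1 a (by simp), fun h => hw (by simp [h])⟩
    exact ⟨ha, ha, SimpleGraph.Reachable.refl _⟩
  | @cons a c _ h q ih =>
    have hw' : w ∉ q.support := fun hc => hw (by simp [hc])
    obtain ⟨hC, hB, hr⟩ := ih hq.of_cons hw'
    have haw : a ≠ w := fun h1 => hw (by simp [h1])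
    have ha : a ∈ ((ball G w r).deleteVerts {w}).verts :=
      mem_pballVerts.mpr ⟨hq.1 a (by simp), haw⟩
    refine ⟨ha, hB, SimpleGraph.Reachable.trans ?_ hr⟩
    refine SimpleGraph.Adj.reachable ?_
    show ((ball G w r).deleteVerts {w}).Adj a c
    rw [SimpleGraph.Subgraph.deleteVerts_adj]
    obtain ⟨hmem, hne⟩ := mem_pballVerts.mp ha
    obtain ⟨hmemC, hneC⟩ := mem_pballVerts.mp hC
    exact ⟨hmem, by simpa using hne, hmemC, by simpa using hneC,
      h, hmem, hmemC, fun he hc2 => hq.2 a c (by simp) he hc2⟩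

end Aux
section Cut

variable {G : SimpleGraph V} {r : ℕ} {v w : V}

/-- Projection from the cut graph back to `G`. -/
def cutProj (G : SimpleGraph V) (r : ℕ) (v : V) : VCutVert G r v → V :=
  Sum.elim (fun u => u.1) (fun _ => v)

lemma adj_cutProj {a b : VCutVert G r v} (h : (vertexCut G r v).Adj a b) :
    G.Adj (cutProj G r v a) (cutProj G r v b) := by
  rcases a with u | c <;> rcases b with u' | c'
  · exact h.elim (fun h' => h') (fun h' => (h' : G.Adj u'.1 u.1).symm)
  · exact h.elim (fun h' => (h' : G.Adj v u.1 ∧ _).1.symm) (fun h' => h'.elim)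
  · exact h.elim (fun h' => h'.elim) (fun h' => (h' : G.Adj v u'.1 ∧ _).1)
  · exact h.elim (fun h' => h'.elim) (fun h' => h'.elim)

/-- Projection of walks of the cut graph. -/
def projWalk : ∀ {a b : VCutVert G r v}, (vertexCut G r v).Walk a b →
    G.Walk (cutProj G r v a) (cutProj G r v b)
  | _, _, SimpleGraph.Walk.nil => SimpleGraph.Walk.nil
  | _, _, SimpleGraph.Walk.cons h p => SimpleGraph.Walk.cons (adj_cutProj h) (projWalk p)

@[simp] lemma length_projWalk {a b : VCutVert G r v} (p : (vertexCut G r v).Walk a b) :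
    (projWalk p).length = p.length := by
  induction p with
  | nil => rfl
  | cons h p ih => simp [projWalk, ih]

@[simp] lemma support_projWalk {a b : VCutVert G r v} (p : (vertexCut G r v).Walk a b) :
    (projWalk p).support = p.support.map (cutProj G r v) := by
  induction p with
  | nil => rfl
  | cons h p ih => simp [projWalk, ih]

@[simp] lemma edges_projWalk {a b : VCutVert G r v} (p : (vertexCut G r v).Walk a b) :
    (projWalk p).edges = p.edges.map (Sym2.map (cutProj G r v)) := by
  induction p with
  | nil => rfl
  | cons h p ih => simp [projWalk, ih, SimpleGraph.Walk.edges_cons]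

lemma reach_cutProj {a b : VCutVert G r v} (h : (vertexCut G r v).Reachable a b) :
    G.Reachable (cutProj G r v a) (cutProj G r v b) := by
  obtain ⟨p⟩ := h
  exact ⟨projWalk p⟩

lemma dist_cutProj {a b : VCutVert G r v} (h : (vertexCut G r v).Reachable a b) :
    G.dist (cutProj G r v a) (cutProj G r v b) ≤ (vertexCut G r v).dist a b := by
  obtain ⟨p, hp⟩ := h.exists_walk_length_eq_dist
  calc G.dist _ _ ≤ (projWalk p).length := SimpleGraph.dist_le _
    _ = _ := by rw [length_projWalk, hp]

/-- Lift a walk of `G` avoiding `v` into the cut graph. -/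
def liftInl : ∀ {a b : V} (q : G.Walk a b) (_ : v ∉ q.support) (ha : a ≠ v) (hb : b ≠ v),
    (vertexCut G r v).Walk (Sum.inl ⟨a, ha⟩) (Sum.inl ⟨b, hb⟩)
  | _, _, SimpleGraph.Walk.nil, _, _, _ => SimpleGraph.Walk.nil
  | _, _, SimpleGraph.Walk.cons (v := c) h q, hv, ha, hb =>
      have hc : c ≠ v := fun hcc => hv (by
        rw [SimpleGraph.Walk.support_cons]
        exact List.mem_cons_of_mem _ (hcc ▸ q.start_mem_support))
      SimpleGraph.Walk.cons
        (Or.inl (show vcutAux G r v (Sum.inl ⟨_, ha⟩) (Sum.inl ⟨c, hc⟩) from h))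
        (liftInl q (fun hq => hv (by simp [hq])) hc hb)

@[simp] lemma length_liftInl {a b : V} (q : G.Walk a b) (hv : v ∉ q.support)
    (ha : a ≠ v) (hb : b ≠ v) :
    (liftInl (r := r) q hv ha hb).length = q.length := by
  induction q with
  | nil => rfl
  | cons h q ih => exact congrArg (· + 1) (ih _ _ _)

end Cut
section Core

variable {G : SimpleGraph V} {r : ℕ} {w v : V}

lemma pball_adj {a c : V} (ha : a ∈ ((ball G w r).deleteVerts {w}).verts)
    (hc : c ∈ ((ball G w r).deleteVerts {w}).verts) (h : G.Adj a c)
    (hev : Even r → ¬(G.dist w a = r / 2 ∧ G.dist w c = r / 2)) :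
    (pBallG G r w).Adj ⟨a, ha⟩ ⟨c, hc⟩ := by
  obtain ⟨hma, hna⟩ := mem_pballVerts.mp ha
  obtain ⟨hmc, hnc⟩ := mem_pballVerts.mp hc
  show ((ball G w r).deleteVerts {w}).Adj a c
  rw [SimpleGraph.Subgraph.deleteVerts_adj]
  exact ⟨hma, by simpa using hna, hmc, by simpa using hnc, h, hma, hmc, hev⟩

/-- A geodesic from `z` to `w` avoiding `v` that satisfies the numeric conditions lies in the
punctured ball around `v` and connects `z` to `w` there. -/
lemma C1 (hwv : w ≠ v) (hvw : G.Reachable v w) :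
    ∀ (n : ℕ) {z : V} (q : G.Walk z w), q.length ≤ n → q.length = G.dist z w →
    v ∉ q.support →
    G.dist v z + G.dist v w + G.dist w z ≤ 2 * (r / 2) + 1 →
    (Even r → G.dist v z + G.dist v w + G.dist w z ≤ 2 * (r / 2)) →
    ∃ (hz : z ∈ ((ball G v r).deleteVerts {v}).verts)
      (hw2 : w ∈ ((ball G v r).deleteVerts {v}).verts),
      (pBallG G r v).Reachable ⟨z, hz⟩ ⟨w, hw2⟩ := by
  intro n
  induction n with
  | zero =>
    intro z q hn hlen hvs hI hIe
    have hzw : z = w := q.eq_of_length_eq_zero (by omega)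
    subst hzw
    have hmem : z ∈ ((ball G v r).deleteVerts {v}).verts := by
      rw [mem_pballVerts]
      refine ⟨⟨hvw, ?_⟩, hwv⟩
      rw [SimpleGraph.dist_self] at hI
      omega
    exact ⟨hmem, hmem, SimpleGraph.Reachable.refl _⟩
  | succ n ihn =>
    intro z q hn hlen hvs hI hIe
    cases q with
    | nil =>
      have hmem : w ∈ ((ball G v r).deleteVerts {v}).verts := by
        rw [mem_pballVerts]
        refine ⟨⟨hvw, ?_⟩, hwv⟩
        rw [SimpleGraph.dist_self] at hI
        omega
      exact ⟨hmem, hmem, SimpleGraph.Reachable.refl _⟩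
    | @cons _ c _ h q' =>
      have hzc : z ≠ v := fun hh => hvs (by simp [hh])
      have hreach_wz : G.Reachable w z := ⟨(SimpleGraph.Walk.cons h q').reverse⟩
      have hreach_vz : G.Reachable v z := hvw.trans hreach_wz
      have hreach_wc : G.Reachable w c := ⟨q'.reverse⟩
      have hlen' : q'.length + 1 = G.dist z w := by
        rw [← hlen, SimpleGraph.Walk.length_cons]
      have hle1 : G.dist c w ≤ q'.length := SimpleGraph.dist_le q'
      have hle2 : G.dist z w ≤ 1 + G.dist c w := by
        obtain ⟨p, hp⟩ := (hreach_wc.symm).exists_walk_length_eq_dist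
        have := SimpleGraph.dist_le (SimpleGraph.Walk.cons h p)
        rw [SimpleGraph.Walk.length_cons, hp] at this
        omega
      have hq'len : q'.length = G.dist c w := by omega
      have hcw : G.dist w c + 1 = G.dist w z := by
        rw [SimpleGraph.dist_comm (u := w)]
        rw [SimpleGraph.dist_comm (u := w)]
        omega
      have hdvz : 2 * G.dist v z ≤ 2 * (r / 2) + 1 := by
        have := dist_tri (G := G) hvw hreach_wz
        omega
      have hdvc : G.dist v c ≤ G.dist v z + 1 := by
        have := dist_tri (G := G) hreach_vz h.reachable
        have h1 : G.dist z c ≤ 1 := by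
          have := SimpleGraph.dist_le (SimpleGraph.Walk.cons h (SimpleGraph.Walk.nil' c))
          simpa using this
        omega
      have hIc : G.dist v c + G.dist v w + G.dist w c ≤ 2 * (r / 2) + 1 := by omega
      have hIec : Even r → G.dist v c + G.dist v w + G.dist w c ≤ 2 * (r / 2) := by
        intro he; have := hIe he; omega
      obtain ⟨hcm, hwm, hr⟩ := ihn q' (by
          have := SimpleGraph.Walk.length_cons h q'
          omega) hq'len (fun hh => hvs (by simp [hh])) hIc hIec
      have hzm : z ∈ ((ball G v r).deleteVerts {v}).verts := by
        rw [mem_pballVerts]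
        exact ⟨⟨hreach_vz, by omega⟩, hzc⟩
      refine ⟨hzm, hwm, SimpleGraph.Reachable.trans (SimpleGraph.Adj.reachable ?_) hr⟩
      refine pball_adj hzm hcm h ?_
      intro he hcon
      have hx := hIe he
      have htri : G.dist v c ≤ G.dist v w + G.dist w c := dist_tri hvw hreach_wc
      omega

/-- Key lemma: a vertex `z` with a `v`-avoiding walk to `w` inside the ball around `w`,
satisfying the numeric conditions, lies in the same component as `w` in the punctured
ball around `v`. -/
lemma K2ind (hwv : w ≠ v) (hvw : G.Reachable v w) :
    ∀ (n : ℕ) {z : V} (R : G.Walk z w), R.length ≤ n → z ≠ v → BW G w r R →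
    v ∉ R.support →
    G.dist v z + G.dist v w + G.dist w z ≤ 2 * (r / 2) + 1 →
    (Even r → G.dist v z + G.dist v w + G.dist w z ≤ 2 * (r / 2)) →
    ∃ (hz : z ∈ ((ball G v r).deleteVerts {v}).verts)
      (hw2 : w ∈ ((ball G v r).deleteVerts {v}).verts),
      (pBallG G r v).Reachable ⟨z, hz⟩ ⟨w, hw2⟩ := by
  intro n
  induction n with
  | zero =>
    intro z R hRlen hzv hBW hvs hI hIe
    by_cases hex : ∃ q : G.Walk z w, q.length = G.dist z w ∧ v ∉ q.support
    · obtain ⟨q, hq1, hq2⟩ := hex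
      exact C1 hwv hvw q.length q le_rfl hq1 hq2 hI hIe
    · exfalso
      have h0 : G.dist z w = 0 := by
        have := SimpleGraph.dist_le R
        omega
      have hzw : z = w := (SimpleGraph.Reachable.dist_eq_zero_iff ⟨R⟩).mp h0
      subst hzw
      exact hex ⟨SimpleGraph.Walk.nil, by simp [SimpleGraph.dist_self], by
        simp only [SimpleGraph.Walk.support_nil, List.mem_singleton]
        exact fun hh => hwv hh.symm⟩
  | succ n ih =>
    intro z R hRlen hzv hBW hvs hI hIe
    by_cases hex : ∃ q : G.Walk z w, q.length = G.dist z w ∧ v ∉ q.support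
    · obtain ⟨q, hq1, hq2⟩ := hex
      exact C1 hwv hvw q.length q le_rfl hq1 hq2 hI hIe
    -- all geodesics from z to w pass through v
    have hreach_zw : G.Reachable z w := ⟨R⟩
    have hzw : G.dist z w = G.dist z v + G.dist v w := by
      classical
      obtain ⟨q₀, hq₀⟩ := hreach_zw.exists_walk_length_eq_dist
      have hvin : v ∈ q₀.support := by
        by_contra hvn
        exact hex ⟨q₀, hq₀, hvn⟩
      have hle1 : G.dist z v ≤ (q₀.takeUntil v hvin).length := SimpleGraph.dist_le _
      have hle2 : G.dist v w ≤ (q₀.dropUntil v hvin).length := SimpleGraph.dist_le _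
      have hsum : (q₀.takeUntil v hvin).length + (q₀.dropUntil v hvin).length = q₀.length := by
        rw [← SimpleGraph.Walk.length_append, SimpleGraph.Walk.take_spec]
      have htri : G.dist z w ≤ G.dist z v + G.dist v w :=
        dist_tri (hreach_zw.trans hvw.symm) hvw
      omega
    cases R with
    | nil =>
      exfalso
      rw [SimpleGraph.dist_self] at hzw
      have : G.dist v w = 0 := by omega
      exact hwv (((SimpleGraph.Reachable.dist_eq_zero_iff hvw).mp this).symm)
    | @cons _ z₁ _ h R' =>
      have hz1v : z₁ ≠ v := fun hh => hvs (by
        rw [SimpleGraph.Walk.support_cons]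
        exact List.mem_cons_of_mem _ (hh ▸ R'.start_mem_support))
      have ht1 : 1 ≤ G.dist v w := hvw.pos_dist_of_ne (fun hh => hwv hh.symm)
      have hzs : G.dist w z ≤ r / 2 := (hBW.head_mem).2
      have hz1s : G.dist w z₁ ≤ r / 2 := (hBW.1 z₁ (by simp)).2
      have hzw' : G.dist w z = G.dist v z + G.dist v w := by
        rw [SimpleGraph.dist_comm] at hzw
        rw [hzw, SimpleGraph.dist_comm (u := z)]
      have hreach_wz : G.Reachable w z := (hBW.head_mem).1
      have hreach_vz : G.Reachable v z := hvw.trans hreach_wz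
      have hdvz1 : G.dist v z₁ ≤ G.dist v z + 1 := by
        have := dist_tri (G := G) hreach_vz h.reachable
        have h1 : G.dist z z₁ ≤ 1 := by
          have := SimpleGraph.dist_le (SimpleGraph.Walk.cons h (SimpleGraph.Walk.nil' z₁))
          simpa using this
        omega
      have hI1 : G.dist v z₁ + G.dist v w + G.dist w z₁ ≤ 2 * (r / 2) + 1 := by omega
      have hIe1 : Even r → G.dist v z₁ + G.dist v w + G.dist w z₁ ≤ 2 * (r / 2) := by
        intro he
        by_cases hcase : G.dist w z = r / 2
        · have hne := hBW.2 z z₁ (by rw [SimpleGraph.Walk.edges_cons]; exact List.mem_cons_self) he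
          have : G.dist w z₁ ≠ r / 2 := fun hh => hne ⟨hcase, hh⟩
          omega
        · omega
      obtain ⟨hz1m, hwm, hr1⟩ := ih R' (by
          have := SimpleGraph.Walk.length_cons h R'
          omega) hz1v hBW.of_cons (fun hh => hvs (by simp [hh])) hI1 hIe1
      have hzm : z ∈ ((ball G v r).deleteVerts {v}).verts := by
        rw [mem_pballVerts]
        exact ⟨⟨hreach_vz, by omega⟩, hzv⟩
      refine ⟨hzm, hwm, SimpleGraph.Reachable.trans (SimpleGraph.Adj.reachable ?_) hr1⟩
      refine pball_adj hzm hz1m h ?_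
      rintro he ⟨h1, _⟩
      omega

end Core
section Dist

variable {G : SimpleGraph V} {r : ℕ} {w v : V}

/-- A geodesic walk lies in any ball containing its far endpoint. -/
lemma bw_of_shortest {a c : V} (q : G.Walk a c) :
    G.dist w a + q.length = G.dist w c → G.dist w c ≤ r / 2 → G.Reachable w a →
    BW G w r q := by
  induction q with
  | nil =>
    intro h1 _ h3
    refine ⟨?_, by simp⟩
    intro z hz
    simp only [SimpleGraph.Walk.support_nil, List.mem_singleton] at hz
    subst hz
    exact ⟨h3, by simp at h1; omega⟩
  | @cons a d c h q' ih =>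
    intro h1 h2 h3
    rw [SimpleGraph.Walk.length_cons] at h1
    have hd_le : G.dist w d ≤ G.dist w a + 1 := by
      have htr := dist_tri (G := G) h3 h.reachable
      have h4 : G.dist a d ≤ 1 := by
        have := SimpleGraph.dist_le (SimpleGraph.Walk.cons h (SimpleGraph.Walk.nil' d))
        simpa using this
      omega
    have h5 : G.dist w c ≤ G.dist w d + q'.length := by
      have htr := dist_tri (G := G) (h3.trans h.reachable) ⟨q'⟩
      have := SimpleGraph.dist_le q'
      omega
    have hda : G.dist w d = G.dist w a + 1 := by omega
    have ihq := ih (by omega) h2 (h3.trans h.reachable)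
    exact ihq.cons h3 (by omega) (fun _ hc => by obtain ⟨e1, e2⟩ := hc; omega)

/-- `z` has a `v`-avoiding walk to `w` inside the ball around `w`. -/
def Acc (G : SimpleGraph V) (r : ℕ) (v w z : V) : Prop :=
  ∃ R : G.Walk z w, BW G w r R ∧ v ∉ R.support

/-- Distances from `w` are preserved by the local cutting, for accessible vertices. -/
lemma distLift (hwv : w ≠ v) {z : V} (hz : z ≠ v) (hacc : Acc G r v w z)
    (hrz : G.Reachable w z) (hdz : G.dist w z ≤ r / 2) :
    ∃ p : (vertexCut G r v).Walk (Sum.inl ⟨w, hwv⟩) (Sum.inl ⟨z, hz⟩),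
      p.length = G.dist w z := by
  classical
  by_cases hex : ∃ q : G.Walk w z, q.length = G.dist w z ∧ v ∉ q.support
  · obtain ⟨q, h1, h2⟩ := hex
    exact ⟨liftInl q h2 hwv hz, by rw [length_liftInl, h1]⟩
  · obtain ⟨q₀', hq₀'⟩ := hrz.exists_walk_length_eq_dist
    set p₀ := q₀'.bypass with hp₀def
    have hbp : p₀.IsPath := q₀'.bypass_isPath
    have hlen : p₀.length = G.dist w z := by
      have h1 : p₀.length ≤ q₀'.length := SimpleGraph.Walk.length_bypass_le q₀'
      have h2 := SimpleGraph.dist_le p₀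
      omega
    have hvp : v ∈ p₀.support := by
      by_contra hvn
      exact hex ⟨p₀, hlen, hvn⟩
    set q₁ := p₀.takeUntil v hvp with hq₁def
    set q₂ := p₀.dropUntil v hvp with hq₂def
    have hspec : q₁.append q₂ = p₀ := p₀.take_spec hvp
    have hsum : q₁.length + q₂.length = p₀.length := by
      rw [← hspec]
      exact (SimpleGraph.Walk.length_append _ _).symm
    have hrwv : G.Reachable w v := ⟨q₁⟩
    have hrvz : G.Reachable v z := ⟨q₂⟩
    have htri : G.dist w z ≤ G.dist w v + G.dist v z := dist_tri hrwv hrvz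
    have hq₁len : q₁.length = G.dist w v := by
      have h1 := SimpleGraph.dist_le q₁
      have h2 := SimpleGraph.dist_le q₂
      omega
    have hq₂len : q₂.length = G.dist v z := by
      have h1 := SimpleGraph.dist_le q₁
      have h2 := SimpleGraph.dist_le q₂
      omega
    have hdistsum : G.dist w z = G.dist w v + G.dist v z := by omega
    have ht1 : 1 ≤ G.dist w v := hrwv.pos_dist_of_ne hwv
    have hdvz1 : 1 ≤ G.dist v z := hrvz.pos_dist_of_ne (Ne.symm hz)
    obtain ⟨u₁, hadj₁, s₁, hs₁eq⟩ :=
      SimpleGraph.Walk.exists_eq_cons_of_ne (fun h => hwv h.symm) q₁.reverse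
    obtain ⟨u₂, hadj₂, s₂, hs₂eq⟩ :=
      SimpleGraph.Walk.exists_eq_cons_of_ne (Ne.symm hz) q₂
    have hnd : p₀.support.Nodup := hbp.support_nodup
    have happ : p₀.support = q₁.support ++ q₂.support.tail := by
      rw [← hspec, SimpleGraph.Walk.support_append]
    have hq₂tail : q₂.support.tail = s₂.support := by
      rw [hs₂eq, SimpleGraph.Walk.support_cons, List.tail_cons]
    have hvs₂ : v ∉ s₂.support := by
      rw [happ] at hnd
      have hdisj := List.disjoint_of_nodup_append hnd
      rw [hq₂tail] at hdisj
      exact hdisj q₁.end_mem_support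
    have hnd₁ : q₁.reverse.support.Nodup := by
      rw [SimpleGraph.Walk.support_reverse, List.nodup_reverse]
      exact (hbp.takeUntil hvp).support_nodup
    have hvs₁ : v ∉ s₁.support := by
      rw [hs₁eq, SimpleGraph.Walk.support_cons] at hnd₁
      exact (List.nodup_cons.mp hnd₁).1
    have hu₁v : u₁ ≠ v := fun h => hvs₁ (h ▸ s₁.start_mem_support)
    have hu₂v : u₂ ≠ v := fun h => hvs₂ (h ▸ s₂.start_mem_support)
    have hs₁len : s₁.length + 1 = G.dist w v := by
      have := congrArg SimpleGraph.Walk.length hs₁eq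
      rw [SimpleGraph.Walk.length_reverse, SimpleGraph.Walk.length_cons] at this
      omega
    have hs₂len : s₂.length + 1 = G.dist v z := by
      have := congrArg SimpleGraph.Walk.length hs₂eq
      rw [SimpleGraph.Walk.length_cons] at this
      omega
    have hru₁ : G.Reachable w u₁ := ⟨s₁.reverse⟩
    have hdwu₁ : G.dist w u₁ + 1 = G.dist w v := by
      have hle : G.dist w u₁ ≤ s₁.length := by
        have := SimpleGraph.dist_le s₁.reverse
        rwa [SimpleGraph.Walk.length_reverse] at this
      have hge : G.dist w v ≤ G.dist w u₁ + 1 := by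
        have htr := dist_tri (G := G) hru₁ hadj₁.symm.reachable
        have h4 : G.dist u₁ v ≤ 1 := by
          have := SimpleGraph.dist_le (SimpleGraph.Walk.cons hadj₁.symm (SimpleGraph.Walk.nil' v))
          simpa using this
        omega
      omega
    have hru₂ : G.Reachable w u₂ := hrwv.trans hadj₂.reachable
    have hdwu₂ : G.dist w u₂ = G.dist w v + 1 := by
      have hle : G.dist w u₂ ≤ G.dist w v + 1 := by
        have htr := dist_tri (G := G) hrwv hadj₂.reachable
        have h4 : G.dist v u₂ ≤ 1 := by
          have := SimpleGraph.dist_le (SimpleGraph.Walk.cons hadj₂ (SimpleGraph.Walk.nil' u₂))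
          simpa using this
        omega
      have hge : G.dist w z ≤ G.dist w u₂ + s₂.length := by
        have htr := dist_tri (G := G) hru₂ ⟨s₂⟩
        have := SimpleGraph.dist_le s₂
        omega
      omega
    have hts : G.dist w v + 1 ≤ r / 2 := by omega
    have bs₁ : BW G w r s₁ := by
      have hb := bw_of_shortest (w := w) (r := r) s₁.reverse
        (by rw [SimpleGraph.dist_self, SimpleGraph.Walk.length_reverse]; omega)
        (by omega) (SimpleGraph.Reachable.refl w)
      have := hb.reverse
      rwa [SimpleGraph.Walk.reverse_reverse] at this
    have bs₂ : BW G w r s₂ := bw_of_shortest s₂ (by omega) hdz hru₂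
    have hcomm : G.dist v w = G.dist w v := SimpleGraph.dist_comm
    have hdvu₁ : G.dist v u₁ ≤ 1 := by
      have := SimpleGraph.dist_le (SimpleGraph.Walk.cons hadj₁ (SimpleGraph.Walk.nil' u₁))
      simpa using this
    have hdvu₂ : G.dist v u₂ ≤ 1 := by
      have := SimpleGraph.dist_le (SimpleGraph.Walk.cons hadj₂ (SimpleGraph.Walk.nil' u₂))
      simpa using this
    obtain ⟨hm₁, hwm₁, hr₁⟩ := K2ind hwv hrwv.symm s₁.length s₁ le_rfl hu₁v bs₁ hvs₁
      (by omega) (fun _ => by omega)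
    obtain ⟨Rz, hRz, hRzv⟩ := hacc
    have hvapp : v ∉ (s₂.append Rz).support := by
      rw [SimpleGraph.Walk.mem_support_append_iff]
      rintro (h | h)
      · exact hvs₂ h
      · exact hRzv h
    obtain ⟨hm₂, hwm₂, hr₂⟩ := K2ind hwv hrwv.symm (s₂.append Rz).length (s₂.append Rz)
      le_rfl hu₂v (bs₂.append hRz) hvapp (by omega) (fun _ => by omega)
    have hcomp : (pBallG G r v).connectedComponentMk ⟨u₂, hm₂⟩ =
        (pBallG G r v).connectedComponentMk ⟨u₁, hm₁⟩ :=
      SimpleGraph.ConnectedComponent.sound (hr₂.trans hr₁.symm)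
    have hvs₁r : v ∉ s₁.reverse.support := by
      rw [SimpleGraph.Walk.support_reverse, List.mem_reverse]
      exact hvs₁
    have e₁ : (vertexCut G r v).Adj (Sum.inl ⟨u₁, hu₁v⟩)
        (Sum.inr ((pBallG G r v).connectedComponentMk ⟨u₁, hm₁⟩)) :=
      Or.inl (show vcutAux G r v (Sum.inl ⟨u₁, hu₁v⟩)
        (Sum.inr ((pBallG G r v).connectedComponentMk ⟨u₁, hm₁⟩)) from ⟨hadj₁, hm₁, rfl⟩)
    have e₂ : (vertexCut G r v).Adj
        (Sum.inr ((pBallG G r v).connectedComponentMk ⟨u₁, hm₁⟩)) (Sum.inl ⟨u₂, hu₂v⟩) :=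
      Or.inr (show vcutAux G r v (Sum.inl ⟨u₂, hu₂v⟩)
        (Sum.inr ((pBallG G r v).connectedComponentMk ⟨u₁, hm₁⟩)) from ⟨hadj₂, hm₂, hcomp⟩)
    refine ⟨(liftInl s₁.reverse hvs₁r hwv hu₁v).append
      (SimpleGraph.Walk.cons e₁ (SimpleGraph.Walk.cons e₂
          (liftInl s₂ hvs₂ hu₂v hz))), ?_⟩
    erw [SimpleGraph.Walk.length_append, SimpleGraph.Walk.length_cons,
      SimpleGraph.Walk.length_cons, length_liftInl, length_liftInl,
      SimpleGraph.Walk.length_reverse]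
    omega

/-- The slice of `v` containing `w` is at distance `dist w v` from `w` in the cut graph. -/
lemma sliceLift (hwv : w ≠ v) (hrwv : G.Reachable w v) (htle : G.dist w v ≤ r / 2)
    (hwm : w ∈ ((ball G v r).deleteVerts {v}).verts) :
    ∃ p : (vertexCut G r v).Walk (Sum.inl ⟨w, hwv⟩)
        (Sum.inr ((pBallG G r v).connectedComponentMk ⟨w, hwm⟩)),
      p.length = G.dist w v := by
  classical
  obtain ⟨q₀', hq₀'⟩ := hrwv.exists_walk_length_eq_dist
  set p₀ := q₀'.bypass with hp₀def
  have hbp : p₀.IsPath := q₀'.bypass_isPath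
  have hlen : p₀.length = G.dist w v := by
    have h1 : p₀.length ≤ q₀'.length := SimpleGraph.Walk.length_bypass_le q₀'
    have h2 := SimpleGraph.dist_le p₀
    omega
  have ht1 : 1 ≤ G.dist w v := hrwv.pos_dist_of_ne hwv
  obtain ⟨u₁, hadj₁, s₁, hs₁eq⟩ :=
    SimpleGraph.Walk.exists_eq_cons_of_ne (fun h => hwv h.symm) p₀.reverse
  have hnd₁ : p₀.reverse.support.Nodup := by
    rw [SimpleGraph.Walk.support_reverse, List.nodup_reverse]
    exact hbp.support_nodup
  have hvs₁ : v ∉ s₁.support := by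
    rw [hs₁eq, SimpleGraph.Walk.support_cons] at hnd₁
    exact (List.nodup_cons.mp hnd₁).1
  have hu₁v : u₁ ≠ v := fun h => hvs₁ (h ▸ s₁.start_mem_support)
  have hs₁len : s₁.length + 1 = G.dist w v := by
    have := congrArg SimpleGraph.Walk.length hs₁eq
    rw [SimpleGraph.Walk.length_reverse, SimpleGraph.Walk.length_cons] at this
    omega
  have hru₁ : G.Reachable w u₁ := ⟨s₁.reverse⟩
  have hdwu₁ : G.dist w u₁ + 1 = G.dist w v := by
    have hle : G.dist w u₁ ≤ s₁.length := by
      have := SimpleGraph.dist_le s₁.reverse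
      rwa [SimpleGraph.Walk.length_reverse] at this
    have hge : G.dist w v ≤ G.dist w u₁ + 1 := by
      have htr := dist_tri (G := G) hru₁ hadj₁.symm.reachable
      have h4 : G.dist u₁ v ≤ 1 := by
        have := SimpleGraph.dist_le (SimpleGraph.Walk.cons hadj₁.symm (SimpleGraph.Walk.nil' v))
        simpa using this
      omega
    omega
  have bs₁ : BW G w r s₁ := by
    have hb := bw_of_shortest (w := w) (r := r) s₁.reverse
      (by rw [SimpleGraph.dist_self, SimpleGraph.Walk.length_reverse]; omega)
      (by omega) (SimpleGraph.Reachable.refl w)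
    have := hb.reverse
    rwa [SimpleGraph.Walk.reverse_reverse] at this
  have hcomm : G.dist v w = G.dist w v := SimpleGraph.dist_comm
  have hdvu₁ : G.dist v u₁ ≤ 1 := by
    have := SimpleGraph.dist_le (SimpleGraph.Walk.cons hadj₁ (SimpleGraph.Walk.nil' u₁))
    simpa using this
  obtain ⟨hm₁, hwm₁, hr₁⟩ := K2ind hwv hrwv.symm s₁.length s₁ le_rfl hu₁v bs₁ hvs₁
    (by omega) (fun _ => by omega)
  have hcomp : (pBallG G r v).connectedComponentMk ⟨u₁, hm₁⟩ =
      (pBallG G r v).connectedComponentMk ⟨w, hwm⟩ :=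
    SimpleGraph.ConnectedComponent.sound hr₁
  have hvs₁r : v ∉ s₁.reverse.support := by
    rw [SimpleGraph.Walk.support_reverse, List.mem_reverse]
    exact hvs₁
  have e₁ : (vertexCut G r v).Adj (Sum.inl ⟨u₁, hu₁v⟩)
      (Sum.inr ((pBallG G r v).connectedComponentMk ⟨w, hwm⟩)) :=
    Or.inl (show vcutAux G r v (Sum.inl ⟨u₁, hu₁v⟩)
      (Sum.inr ((pBallG G r v).connectedComponentMk ⟨w, hwm⟩)) from ⟨hadj₁, hm₁, hcomp⟩)
  refine ⟨(liftInl s₁.reverse hvs₁r hwv hu₁v).append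
    (SimpleGraph.Walk.cons e₁ SimpleGraph.Walk.nil), ?_⟩
  erw [SimpleGraph.Walk.length_append, SimpleGraph.Walk.length_cons,
    SimpleGraph.Walk.length_nil, length_liftInl, SimpleGraph.Walk.length_reverse]
  omega

end Dist
section Lift

variable {G : SimpleGraph V} {r : ℕ} {w v : V}

lemma distLiftEq (hwv : w ≠ v) {z : V} (hz : z ≠ v) (hacc : Acc G r v w z)
    (hrz : G.Reachable w z) (hdz : G.dist w z ≤ r / 2) :
    (vertexCut G r v).Reachable (Sum.inl ⟨w, hwv⟩) (Sum.inl ⟨z, hz⟩) ∧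
    (vertexCut G r v).dist (Sum.inl ⟨w, hwv⟩) (Sum.inl ⟨z, hz⟩) = G.dist w z := by
  obtain ⟨p, hp⟩ := distLift hwv hz hacc hrz hdz
  refine ⟨⟨p⟩, le_antisymm (by rw [← hp]; exact SimpleGraph.dist_le p) ?_⟩
  exact dist_cutProj ⟨p⟩

lemma sliceLiftEq (hwv : w ≠ v) (hrwv : G.Reachable w v) (htle : G.dist w v ≤ r / 2)
    (hwm : w ∈ ((ball G v r).deleteVerts {v}).verts) :
    (vertexCut G r v).Reachable (Sum.inl ⟨w, hwv⟩)
      (Sum.inr ((pBallG G r v).connectedComponentMk ⟨w, hwm⟩)) ∧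
    (vertexCut G r v).dist (Sum.inl ⟨w, hwv⟩)
      (Sum.inr ((pBallG G r v).connectedComponentMk ⟨w, hwm⟩)) = G.dist w v := by
  obtain ⟨p, hp⟩ := sliceLift hwv hrwv htle hwm
  refine ⟨⟨p⟩, le_antisymm (by rw [← hp]; exact SimpleGraph.dist_le p) ?_⟩
  exact dist_cutProj ⟨p⟩

/-- Lift a `v`-free walk of the ball around `w` into the punctured ball of the cut graph. -/
lemma liftSegment (hwv : w ≠ v) :
    ∀ {a b : V} (q : G.Walk a b) (ha : a ≠ v) (hb : b ≠ v), BW G w r q → w ∉ q.support →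
    v ∉ q.support → (∀ z ∈ q.support, Acc G r v w z) →
    ∃ (hA : (Sum.inl ⟨a, ha⟩ : VCutVert G r v) ∈
        ((ball (vertexCut G r v) (Sum.inl ⟨w, hwv⟩) r).deleteVerts {Sum.inl ⟨w, hwv⟩}).verts)
      (hB : (Sum.inl ⟨b, hb⟩ : VCutVert G r v) ∈
        ((ball (vertexCut G r v) (Sum.inl ⟨w, hwv⟩) r).deleteVerts {Sum.inl ⟨w, hwv⟩}).verts),
      (pBallG (vertexCut G r v) r (Sum.inl ⟨w, hwv⟩)).Reachable
        ⟨Sum.inl ⟨a, ha⟩, hA⟩ ⟨Sum.inl ⟨b, hb⟩, hB⟩ := by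
  intro a b q
  induction q with
  | nil =>
    rename_i a
    intro ha hb hBW hwq hvq hacc
    have hmem := hBW.head_mem
    have haw : a ≠ w := fun h => hwq (by simp [h])
    obtain ⟨hre, hde⟩ := distLiftEq hwv ha (hacc a (by simp)) hmem.1 hmem.2
    have hA : (Sum.inl ⟨a, ha⟩ : VCutVert G r v) ∈
        ((ball (vertexCut G r v) (Sum.inl ⟨w, hwv⟩) r).deleteVerts {Sum.inl ⟨w, hwv⟩}).verts := by
      erw [mem_pballVerts]
      refine ⟨⟨hre, by erw [hde]; exact hmem.2⟩, ?_⟩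
      intro hcon
      apply haw
      have := congrArg (cutProj G r v) hcon
      simpa [cutProj] using this
    exact ⟨hA, hA, SimpleGraph.Reachable.refl _⟩
  | @cons a c _ h q' ih =>
    intro ha hb hBW hwq hvq hacc
    have hcv : c ≠ v := fun hh => hvq (by
      rw [SimpleGraph.Walk.support_cons]
      exact List.mem_cons_of_mem _ (hh ▸ q'.start_mem_support))
    obtain ⟨hC, hB, hr⟩ := ih hcv hb hBW.of_cons (fun hh => hwq (by simp [hh]))
      (fun hh => hvq (by simp [hh])) (fun z hz => hacc z (by simp [hz]))
    have hmema := hBW.head_mem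
    have hmemc := hBW.1 c (by simp)
    have haw : a ≠ w := fun hh => hwq (by simp [hh])
    have hcw : c ≠ w := fun hh => hwq (by
      rw [SimpleGraph.Walk.support_cons]
      exact List.mem_cons_of_mem _ (hh ▸ q'.start_mem_support))
    obtain ⟨hrea, hdea⟩ := distLiftEq hwv ha (hacc a (by simp)) hmema.1 hmema.2
    obtain ⟨hrec, hdec⟩ := distLiftEq hwv hcv (hacc c (by simp)) hmemc.1 hmemc.2
    have hA : (Sum.inl ⟨a, ha⟩ : VCutVert G r v) ∈
        ((ball (vertexCut G r v) (Sum.inl ⟨w, hwv⟩) r).deleteVerts {Sum.inl ⟨w, hwv⟩}).verts := by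
      erw [mem_pballVerts]
      refine ⟨⟨hrea, by erw [hdea]; exact hmema.2⟩, ?_⟩
      intro hcon
      apply haw
      have := congrArg (cutProj G r v) hcon
      simpa [cutProj] using this
    refine ⟨hA, hB, SimpleGraph.Reachable.trans (SimpleGraph.Adj.reachable ?_) hr⟩
    refine pball_adj hA hC ?_ ?_
    · exact Or.inl (show vcutAux G r v (Sum.inl ⟨a, ha⟩) (Sum.inl ⟨c, hcv⟩) from h)
    · intro he
      erw [hdea, hdec]
      exact hBW.2 a c (by rw [SimpleGraph.Walk.edges_cons]; exact List.mem_cons_self) he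

/-- Every vertex on a `v`-free in-ball walk ending next to `w` is accessible. -/
lemma accAll (hs : 1 ≤ r / 2) (hwv : w ≠ v) {y a : V} (hy : G.Adj w y) (q : G.Walk a y)
    (hq : BW G w r q) (hv : v ∉ q.support) : ∀ z ∈ q.support, Acc G r v w z := by
  classical
  intro z hz
  refine ⟨(q.dropUntil z hz).append (SimpleGraph.Walk.cons hy.symm (SimpleGraph.Walk.nil' w)),
    ?_, ?_⟩
  · exact (hq.mono (q.support_dropUntil_subset hz) (q.edges_dropUntil_subset hz)).append
      (BW.single hs hy)
  · rw [SimpleGraph.Walk.mem_support_append_iff]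
    rintro (hh | hh)
    · exact hv (q.support_dropUntil_subset hz hh)
    · simp only [SimpleGraph.Walk.support_cons, SimpleGraph.Walk.support_nil,
        List.mem_cons, List.mem_singleton] at hh
      rcases hh with rfl | rfl | hh
      · exact hv (q.end_mem_support)
      · exact hwv rfl
      · exact absurd hh (by simp)

lemma copy_eq_inl (hwv : w ≠ v) {x : V} {x' : VCutVert G r v}
    (hx' : IsCopyNear G r v w hwv x x') (hxv : x ≠ v) : x' = Sum.inl ⟨x, hxv⟩ := by
  rcases hx' with ⟨h, rfl⟩ | ⟨rfl, _, _⟩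
  · rfl
  · exact absurd rfl hxv

lemma copy_eq_inr (hwv : w ≠ v) {x' : VCutVert G r v}
    (hx' : IsCopyNear G r v w hwv v x')
    (hwm : w ∈ ((ball G v r).deleteVerts {v}).verts) :
    x' = Sum.inr ((pBallG G r v).connectedComponentMk ⟨w, hwm⟩) := by
  rcases hx' with ⟨h, _⟩ | ⟨_, ⟨c, rfl⟩, hadj⟩
  · exact absurd rfl h
  · rcases hadj with h' | h'
    · exact (h' : False).elim
    · obtain ⟨_, hh, hcc⟩ := (h' : G.Adj v w ∧ _)
      exact congrArg Sum.inr hcc.symm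

end Lift
section Main

variable {G : SimpleGraph V} {r : ℕ} {w v : V}

/-- Lift a walk starting at `v` (with `x = v` a neighbour of `w`). -/
lemma liftFromV (hs : 1 ≤ r / 2) (hwv : w ≠ v) {y : V} (hy : G.Adj w y) (hyv : y ≠ v)
    (hwm : w ∈ ((ball G v r).deleteVerts {v}).verts)
    (p : G.Walk v y) (hpath : p.IsPath) (hBW : BW G w r p) (hwp : w ∉ p.support) :
    ∃ (hA : (Sum.inr ((pBallG G r v).connectedComponentMk ⟨w, hwm⟩) : VCutVert G r v) ∈
        ((ball (vertexCut G r v) (Sum.inl ⟨w, hwv⟩) r).deleteVerts {Sum.inl ⟨w, hwv⟩}).verts)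
      (hB : (Sum.inl ⟨y, hyv⟩ : VCutVert G r v) ∈
        ((ball (vertexCut G r v) (Sum.inl ⟨w, hwv⟩) r).deleteVerts {Sum.inl ⟨w, hwv⟩}).verts),
      (pBallG (vertexCut G r v) r (Sum.inl ⟨w, hwv⟩)).Reachable
        ⟨Sum.inr ((pBallG G r v).connectedComponentMk ⟨w, hwm⟩), hA⟩ ⟨Sum.inl ⟨y, hyv⟩, hB⟩ := by
  classical
  obtain ⟨u₂, hadj₂, rest, rfl⟩ := SimpleGraph.Walk.exists_eq_cons_of_ne (Ne.symm hyv) p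
  have hvrest : v ∉ rest.support := by
    have := hpath.support_nodup
    rw [SimpleGraph.Walk.support_cons] at this
    exact (List.nodup_cons.mp this).1
  have hu₂v : u₂ ≠ v := fun h => hvrest (h ▸ rest.start_mem_support)
  have ht := hBW.head_mem
  have ht1 : 1 ≤ G.dist w v := (ht.1).pos_dist_of_ne hwv
  have hu₂mem : u₂ ∈ (SimpleGraph.Walk.cons hadj₂ rest).support := by
    rw [SimpleGraph.Walk.support_cons]
    exact List.mem_cons_of_mem _ rest.start_mem_support
  have hu₂w : u₂ ≠ w := fun h => hwp (h ▸ hu₂mem)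
  have hmem₂ := hBW.1 u₂ hu₂mem
  have hd₂pos : 1 ≤ G.dist w u₂ := (hmem₂.1).pos_dist_of_ne (Ne.symm hu₂w)
  have hedge : s(v, u₂) ∈ (SimpleGraph.Walk.cons hadj₂ rest).edges := by
    rw [SimpleGraph.Walk.edges_cons]
    exact List.mem_cons_self
  have hwrest : w ∉ rest.support := fun h => hwp (by
    rw [SimpleGraph.Walk.support_cons]; exact List.mem_cons_of_mem _ h)
  have hbrest : BW G w r rest := hBW.of_cons
  have haccs := accAll hs hwv hy rest hbrest hvrest
  obtain ⟨R₂, hR₂, hR₂v⟩ := haccs u₂ rest.start_mem_support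
  have hcomm : G.dist v w = G.dist w v := SimpleGraph.dist_comm
  have hdvu₂ : G.dist v u₂ ≤ 1 := by
    have := SimpleGraph.dist_le (SimpleGraph.Walk.cons hadj₂ (SimpleGraph.Walk.nil' u₂))
    simpa using this
  obtain ⟨hm₂, hwm₂, hr₂⟩ := K2ind hwv (ht.1).symm R₂.length R₂ le_rfl hu₂v hR₂ hR₂v
    (by have := ht.2; have := hmem₂.2; omega)
    (by intro he
        have h8 := hBW.2 v u₂ hedge he
        have h9 : G.dist w v ≠ r / 2 ∨ G.dist w u₂ ≠ r / 2 := by tauto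
        have := ht.2; have := hmem₂.2
        rcases h9 with h9 | h9 <;> omega)
  have hcomp₂ : (pBallG G r v).connectedComponentMk ⟨u₂, hm₂⟩ =
      (pBallG G r v).connectedComponentMk ⟨w, hwm⟩ :=
    SimpleGraph.ConnectedComponent.sound hr₂
  obtain ⟨hresl₁, hresl₂, hrseg⟩ := liftSegment hwv rest hu₂v hyv hbrest hwrest hvrest haccs
  obtain ⟨hreS, hdeS⟩ := sliceLiftEq hwv ht.1 ht.2 hwm
  have hA : (Sum.inr ((pBallG G r v).connectedComponentMk ⟨w, hwm⟩) : VCutVert G r v) ∈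
      ((ball (vertexCut G r v) (Sum.inl ⟨w, hwv⟩) r).deleteVerts {Sum.inl ⟨w, hwv⟩}).verts := by
    erw [mem_pballVerts]
    exact ⟨⟨hreS, by erw [hdeS]; exact ht.2⟩, by simp⟩
  refine ⟨hA, hresl₂, SimpleGraph.Reachable.trans (SimpleGraph.Adj.reachable ?_) hrseg⟩
  refine pball_adj hA hresl₁ ?_ ?_
  · exact Or.inr (show vcutAux G r v (Sum.inl ⟨u₂, hu₂v⟩)
      (Sum.inr ((pBallG G r v).connectedComponentMk ⟨w, hwm⟩)) from ⟨hadj₂, hm₂, hcomp₂⟩)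
  · intro he
    obtain ⟨hreU, hdeU⟩ := distLiftEq hwv hu₂v (haccs u₂ rest.start_mem_support) hmem₂.1 hmem₂.2
    erw [hdeS, hdeU]
    exact hBW.2 v u₂ hedge he

/-- Main lemma, hard direction: a path of the punctured ball around `w` lifts to the cut graph. -/
lemma mainLift (hs : 1 ≤ r / 2) (hwv : w ≠ v) {x y : V} (hx : G.Adj w x) (hy : G.Adj w y)
    {x' y' : VCutVert G r v} (hx' : IsCopyNear G r v w hwv x x')
    (hy' : IsCopyNear G r v w hwv y y')
    (p : G.Walk x y) (hpath : p.IsPath) (hBW : BW G w r p) (hwp : w ∉ p.support) :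
    ∃ (hx2 : x' ∈ ((ball (vertexCut G r v) (Sum.inl ⟨w, hwv⟩) r).deleteVerts
        {Sum.inl ⟨w, hwv⟩}).verts)
      (hy2 : y' ∈ ((ball (vertexCut G r v) (Sum.inl ⟨w, hwv⟩) r).deleteVerts
        {Sum.inl ⟨w, hwv⟩}).verts),
      (pBallG (vertexCut G r v) r (Sum.inl ⟨w, hwv⟩)).Reachable ⟨x', hx2⟩ ⟨y', hy2⟩ := by
  classical
  by_cases hvp : v ∈ p.support
  · have hmemv := hBW.1 v hvp
    have hwm : w ∈ ((ball G v r).deleteVerts {v}).verts := by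
      rw [mem_pballVerts]
      exact ⟨⟨(hmemv.1).symm, by rw [SimpleGraph.dist_comm]; exact hmemv.2⟩, hwv⟩
    by_cases hxv : x = v
    · obtain rfl := hxv.symm
      by_cases hyv : y = v
      · obtain rfl := hyv.symm
        -- p is a path from v to v, hence nil
        obtain rfl := copy_eq_inr hwv hx' hwm
        obtain rfl := copy_eq_inr hwv hy' hwm
        obtain ⟨hreS, hdeS⟩ := sliceLiftEq hwv (hmemv.1) (hmemv.2) hwm
        have hA : (Sum.inr ((pBallG G r v).connectedComponentMk ⟨w, hwm⟩) : VCutVert G r v) ∈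
            ((ball (vertexCut G r v) (Sum.inl ⟨w, hwv⟩) r).deleteVerts
              {Sum.inl ⟨w, hwv⟩}).verts := by
          erw [mem_pballVerts]
          exact ⟨⟨hreS, by erw [hdeS]; exact hmemv.2⟩, by simp⟩
        exact ⟨hA, hA, SimpleGraph.Reachable.refl _⟩
      · obtain rfl := copy_eq_inr hwv hx' hwm
        obtain rfl := copy_eq_inl hwv hy' hyv
        exact liftFromV hs hwv hy hyv hwm p hpath hBW hwp
    · by_cases hyv : y = v
      · obtain rfl := hyv.symm
        obtain rfl := copy_eq_inl hwv hx' hxv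
        obtain rfl := copy_eq_inr hwv hy' hwm
        obtain ⟨hA, hB, hr⟩ := liftFromV hs hwv hx hxv hwm p.reverse hpath.reverse hBW.reverse
          (by rw [SimpleGraph.Walk.support_reverse, List.mem_reverse]; exact hwp)
        exact ⟨hB, hA, hr.symm⟩
      · -- interior case
        set q₁ := p.takeUntil v hvp with hq₁def
        set q₂ := p.dropUntil v hvp with hq₂def
        have hspec : q₁.append q₂ = p := p.take_spec hvp
        obtain ⟨u₁, hadj₁, s₁, hs₁eq⟩ :=
          SimpleGraph.Walk.exists_eq_cons_of_ne (fun h => hxv h.symm) q₁.reverse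
        obtain ⟨u₂, hadj₂, s₂, hs₂eq⟩ :=
          SimpleGraph.Walk.exists_eq_cons_of_ne (Ne.symm hyv) q₂
        have hnd : p.support.Nodup := hpath.support_nodup
        have happ : p.support = q₁.support ++ q₂.support.tail := by
          rw [← hspec, SimpleGraph.Walk.support_append]
        have hq₂tail : q₂.support.tail = s₂.support := by
          rw [hs₂eq, SimpleGraph.Walk.support_cons, List.tail_cons]
        have hvs₂ : v ∉ s₂.support := by
          rw [happ] at hnd
          have hdisj := List.disjoint_of_nodup_append hnd
          rw [hq₂tail] at hdisj
          exact hdisj q₁.end_mem_support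
        have hnd₁ : q₁.reverse.support.Nodup := by
          rw [SimpleGraph.Walk.support_reverse, List.nodup_reverse]
          exact (hpath.takeUntil hvp).support_nodup
        have hvs₁ : v ∉ s₁.support := by
          rw [hs₁eq, SimpleGraph.Walk.support_cons] at hnd₁
          exact (List.nodup_cons.mp hnd₁).1
        have hu₁v : u₁ ≠ v := fun h => hvs₁ (h ▸ s₁.start_mem_support)
        have hu₂v : u₂ ≠ v := fun h => hvs₂ (h ▸ s₂.start_mem_support)
        have hs₁sub : s₁.support ⊆ p.support := by
          intro z hz
          have h1 : z ∈ q₁.reverse.support := by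
            rw [hs₁eq, SimpleGraph.Walk.support_cons]
            exact List.mem_cons_of_mem _ hz
          rw [SimpleGraph.Walk.support_reverse, List.mem_reverse] at h1
          exact p.support_takeUntil_subset hvp h1
        have hs₂sub : s₂.support ⊆ p.support := by
          intro z hz
          have h1 : z ∈ q₂.support := by
            rw [hs₂eq, SimpleGraph.Walk.support_cons]
            exact List.mem_cons_of_mem _ hz
          exact p.support_dropUntil_subset hvp h1
        have hs₁edges : s₁.edges ⊆ p.edges := by
          intro e he
          have h1 : e ∈ q₁.reverse.edges := by
            rw [hs₁eq, SimpleGraph.Walk.edges_cons]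
            exact List.mem_cons_of_mem _ he
          rw [SimpleGraph.Walk.edges_reverse, List.mem_reverse] at h1
          exact p.edges_takeUntil_subset hvp h1
        have hs₂edges : s₂.edges ⊆ p.edges := by
          intro e he
          have h1 : e ∈ q₂.edges := by
            rw [hs₂eq, SimpleGraph.Walk.edges_cons]
            exact List.mem_cons_of_mem _ he
          exact p.edges_dropUntil_subset hvp h1
        have bs₁ : BW G w r s₁ := hBW.mono hs₁sub hs₁edges
        have bs₂ : BW G w r s₂ := hBW.mono hs₂sub hs₂edges
        have hws₁ : w ∉ s₁.support := fun h => hwp (hs₁sub h)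
        have hws₂ : w ∉ s₂.support := fun h => hwp (hs₂sub h)
        have haccs₁ := accAll hs hwv hx s₁ bs₁ hvs₁
        have haccs₂ := accAll hs hwv hy s₂ bs₂ hvs₂
        have hedge₁ : s(v, u₁) ∈ p.edges := by
          have h1 : s(v, u₁) ∈ q₁.reverse.edges := by
            rw [hs₁eq, SimpleGraph.Walk.edges_cons]
            exact List.mem_cons_self
          rw [SimpleGraph.Walk.edges_reverse, List.mem_reverse] at h1
          exact p.edges_takeUntil_subset hvp h1
        have hedge₂ : s(v, u₂) ∈ p.edges := by
          have h1 : s(v, u₂) ∈ q₂.edges := by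
            rw [hs₂eq, SimpleGraph.Walk.edges_cons]
            exact List.mem_cons_self
          exact p.edges_dropUntil_subset hvp h1
        have hmem₁ := bs₁.head_mem
        have hmem₂ := bs₂.head_mem
        have hu₁w : u₁ ≠ w := fun h => hwp (hs₁sub (h ▸ s₁.start_mem_support))
        have hu₂w : u₂ ≠ w := fun h => hwp (hs₂sub (h ▸ s₂.start_mem_support))
        have hcomm : G.dist v w = G.dist w v := SimpleGraph.dist_comm
        have hdvu₁ : G.dist v u₁ ≤ 1 := by
          have := SimpleGraph.dist_le (SimpleGraph.Walk.cons hadj₁ (SimpleGraph.Walk.nil' u₁))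
          simpa using this
        have hdvu₂ : G.dist v u₂ ≤ 1 := by
          have := SimpleGraph.dist_le (SimpleGraph.Walk.cons hadj₂ (SimpleGraph.Walk.nil' u₂))
          simpa using this
        have hd₁pos : 1 ≤ G.dist w u₁ := (hmem₁.1).pos_dist_of_ne (Ne.symm hu₁w)
        have hd₂pos : 1 ≤ G.dist w u₂ := (hmem₂.1).pos_dist_of_ne (Ne.symm hu₂w)
        obtain ⟨R₁, hR₁, hR₁v⟩ := haccs₁ u₁ s₁.start_mem_support
        obtain ⟨R₂, hR₂, hR₂v⟩ := haccs₂ u₂ s₂.start_mem_support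
        obtain ⟨hm₁, hwm₁, hr₁⟩ := K2ind hwv (hmemv.1).symm R₁.length R₁ le_rfl hu₁v hR₁ hR₁v
          (by have := hmemv.2; have := hmem₁.2; omega)
          (by intro he
              have h8 := hBW.2 v u₁ hedge₁ he
              have h9 : G.dist w v ≠ r / 2 ∨ G.dist w u₁ ≠ r / 2 := by tauto
              have := hmemv.2; have := hmem₁.2
              rcases h9 with h9 | h9 <;> omega)
        obtain ⟨hm₂, hwm₂, hr₂⟩ := K2ind hwv (hmemv.1).symm R₂.length R₂ le_rfl hu₂v hR₂ hR₂v
          (by have := hmemv.2; have := hmem₂.2; omega)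
          (by intro he
              have h8 := hBW.2 v u₂ hedge₂ he
              have h9 : G.dist w v ≠ r / 2 ∨ G.dist w u₂ ≠ r / 2 := by tauto
              have := hmemv.2; have := hmem₂.2
              rcases h9 with h9 | h9 <;> omega)
        have hcomp₁ : (pBallG G r v).connectedComponentMk ⟨u₁, hm₁⟩ =
            (pBallG G r v).connectedComponentMk ⟨w, hwm⟩ :=
          SimpleGraph.ConnectedComponent.sound hr₁
        have hcomp₂ : (pBallG G r v).connectedComponentMk ⟨u₂, hm₂⟩ =
            (pBallG G r v).connectedComponentMk ⟨w, hwm⟩ :=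
          SimpleGraph.ConnectedComponent.sound hr₂
        obtain ⟨hs₁l₁, hs₁l₂, hrseg₁⟩ := liftSegment hwv s₁ hu₁v hxv bs₁ hws₁ hvs₁ haccs₁
        obtain ⟨hs₂l₁, hs₂l₂, hrseg₂⟩ := liftSegment hwv s₂ hu₂v hyv bs₂ hws₂ hvs₂ haccs₂
        obtain ⟨hreS, hdeS⟩ := sliceLiftEq hwv (hmemv.1) (hmemv.2) hwm
        have hA : (Sum.inr ((pBallG G r v).connectedComponentMk ⟨w, hwm⟩) : VCutVert G r v) ∈
            ((ball (vertexCut G r v) (Sum.inl ⟨w, hwv⟩) r).deleteVerts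
              {Sum.inl ⟨w, hwv⟩}).verts := by
          erw [mem_pballVerts]
          exact ⟨⟨hreS, by erw [hdeS]; exact hmemv.2⟩, by simp⟩
        obtain ⟨hreU₁, hdeU₁⟩ := distLiftEq hwv hu₁v (haccs₁ u₁ s₁.start_mem_support)
          hmem₁.1 hmem₁.2
        obtain ⟨hreU₂, hdeU₂⟩ := distLiftEq hwv hu₂v (haccs₂ u₂ s₂.start_mem_support)
          hmem₂.1 hmem₂.2
        have hadjA : (pBallG (vertexCut G r v) r (Sum.inl ⟨w, hwv⟩)).Adj
            ⟨Sum.inl ⟨u₁, hu₁v⟩, hs₁l₁⟩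
            ⟨Sum.inr ((pBallG G r v).connectedComponentMk ⟨w, hwm⟩), hA⟩ := by
          refine pball_adj hs₁l₁ hA ?_ ?_
          · exact Or.inl (show vcutAux G r v (Sum.inl ⟨u₁, hu₁v⟩)
              (Sum.inr ((pBallG G r v).connectedComponentMk ⟨w, hwm⟩)) from ⟨hadj₁, hm₁, hcomp₁⟩)
          · intro he
            erw [hdeS, hdeU₁]
            intro hcc
            exact hBW.2 v u₁ hedge₁ he ⟨hcc.2, hcc.1⟩
        have hadjB : (pBallG (vertexCut G r v) r (Sum.inl ⟨w, hwv⟩)).Adj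
            ⟨Sum.inr ((pBallG G r v).connectedComponentMk ⟨w, hwm⟩), hA⟩
            ⟨Sum.inl ⟨u₂, hu₂v⟩, hs₂l₁⟩ := by
          refine pball_adj hA hs₂l₁ ?_ ?_
          · exact Or.inr (show vcutAux G r v (Sum.inl ⟨u₂, hu₂v⟩)
              (Sum.inr ((pBallG G r v).connectedComponentMk ⟨w, hwm⟩)) from ⟨hadj₂, hm₂, hcomp₂⟩)
          · intro he
            erw [hdeS, hdeU₂]
            exact hBW.2 v u₂ hedge₂ he
        obtain rfl := copy_eq_inl hwv hx' hxv
        obtain rfl := copy_eq_inl hwv hy' hyv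
        exact ⟨hs₁l₂, hs₂l₂, (hrseg₁.symm.trans (hadjA.reachable.trans
          (hadjB.reachable.trans hrseg₂)))⟩
  · -- v not on the path
    have hxv : x ≠ v := fun h => hvp (h ▸ p.start_mem_support)
    have hyv : y ≠ v := fun h => hvp (h ▸ p.end_mem_support)
    obtain rfl := copy_eq_inl hwv hx' hxv
    obtain rfl := copy_eq_inl hwv hy' hyv
    exact liftSegment hwv p hxv hyv hBW hwp hvp (accAll hs hwv hy p hBW hvp)

end Main
section Easy

variable {G : SimpleGraph V} {r : ℕ} {w v : V}

/-- Project reachability in the punctured ball of the cut graph down to `G`. -/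
lemma projDown (hwv : w ≠ v) {x' y' : VCutVert G r v}
    (hx2 : x' ∈ ((ball (vertexCut G r v) (Sum.inl ⟨w, hwv⟩) r).deleteVerts
      {Sum.inl ⟨w, hwv⟩}).verts)
    (hy2 : y' ∈ ((ball (vertexCut G r v) (Sum.inl ⟨w, hwv⟩) r).deleteVerts
      {Sum.inl ⟨w, hwv⟩}).verts)
    (hreach : (pBallG (vertexCut G r v) r (Sum.inl ⟨w, hwv⟩)).Reachable ⟨x', hx2⟩ ⟨y', hy2⟩) :
    ∃ (hx3 : cutProj G r v x' ∈ ((ball G w r).deleteVerts {w}).verts)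
      (hy3 : cutProj G r v y' ∈ ((ball G w r).deleteVerts {w}).verts),
      (pBallG G r w).Reachable ⟨cutProj G r v x', hx3⟩ ⟨cutProj G r v y', hy3⟩ := by
  obtain ⟨P⟩ := hreach
  obtain ⟨W, hW, hwW⟩ := bw_of_pballWalk P
  have hWsupp : ∀ z' ∈ W.support, (vertexCut G r v).Reachable (Sum.inl ⟨w, hwv⟩) z' ∧
      (vertexCut G r v).dist (Sum.inl ⟨w, hwv⟩) z' ≤ r / 2 := hW.1
  have hBWQ : BW G w r (projWalk W) := by
    constructor
    · intro z hz
      rw [support_projWalk, List.mem_map] at hz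
      obtain ⟨z', hz', rfl⟩ := hz
      obtain ⟨hre, hde⟩ := hWsupp z' hz'
      have h1 := reach_cutProj hre
      have h2 := dist_cutProj hre
      exact ⟨h1, le_trans h2 hde⟩
    · intro a b hab he
      rw [edges_projWalk, List.mem_map] at hab
      obtain ⟨e', he', hmap⟩ := hab
      induction e' using Sym2.ind with
      | _ a' b' =>
        rw [Sym2.map_pair_eq, Sym2.eq_iff] at hmap
        have key : ∀ c' d' : VCutVert G r v, s(c', d') ∈ W.edges →
            ¬(G.dist w (cutProj G r v c') = r / 2 ∧ G.dist w (cutProj G r v d') = r / 2) := by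
          intro c' d' hcd hcon
          have hc's : c' ∈ W.support := W.fst_mem_support_of_mem_edges hcd
          have hd's : d' ∈ W.support := W.snd_mem_support_of_mem_edges hcd
          obtain ⟨hrc, hdc⟩ := hWsupp c' hc's
          obtain ⟨hrd, hdd⟩ := hWsupp d' hd's
          have h1 : G.dist w (cutProj G r v c') ≤
              (vertexCut G r v).dist (Sum.inl ⟨w, hwv⟩) c' := dist_cutProj hrc
          have h2 : G.dist w (cutProj G r v d') ≤
              (vertexCut G r v).dist (Sum.inl ⟨w, hwv⟩) d' := dist_cutProj hrd
          obtain ⟨hc1, hc2⟩ := hcon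
          refine hW.2 c' d' hcd he ⟨?_, ?_⟩ <;> omega
        rintro ⟨h1, h2⟩
        rcases hmap with ⟨rfl, rfl⟩ | ⟨rfl, rfl⟩
        · exact key a' b' he' ⟨h1, h2⟩
        · exact key a' b' he' ⟨h2, h1⟩
  have hwQ : w ∉ (projWalk W).support := by
    rw [support_projWalk, List.mem_map]
    rintro ⟨z', hz', hproj⟩
    rcases z' with u | c
    · have : u = (⟨w, hwv⟩ : {u : V // u ≠ v}) := Subtype.ext hproj
      subst this
      exact hwW hz'
    · exact hwv hproj.symm
  exact pballReach_of_bw (projWalk W) hBWQ hwQ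

lemma proj_copy {x : V} {x' : VCutVert G r v} (hwv : w ≠ v)
    (hx' : IsCopyNear G r v w hwv x x') : cutProj G r v x' = x := by
  rcases hx' with ⟨h, rfl⟩ | ⟨rfl, ⟨c, rfl⟩, _⟩
  · rfl
  · rfl

end Easy
/-- Let `G'` be obtained from `G` by `r`-locally cutting a vertex `v`, and let `w ≠ v`.
Two neighbours `x` and `y` of `w` lie in the same component of the punctured ball
`B_{r/2}(w) - w` in `G` iff their copies lie in the same component of the punctured ball
around (the copy of) `w` in `G'`. -/
theorem stmt18 {V : Type u} (G : SimpleGraph V) (r : ℕ) (hr : 1 ≤ r) (v w : V) (hwv : w ≠ v)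
    (x y : V) (hx : G.Adj w x) (hy : G.Adj w y)
    (x' y' : VCutVert G r v)
    (hx' : IsCopyNear G r v w hwv x x') (hy' : IsCopyNear G r v w hwv y y') :
    ((∃ (hx2 : x ∈ ((ball G w r).deleteVerts {w}).verts)
        (hy2 : y ∈ ((ball G w r).deleteVerts {w}).verts),
        (pBallG G r w).Reachable ⟨x, hx2⟩ ⟨y, hy2⟩) ↔
      (∃ (hx2 : x' ∈ ((ball (vertexCut G r v) (Sum.inl ⟨w, hwv⟩) r).deleteVerts
          {Sum.inl ⟨w, hwv⟩}).verts)
        (hy2 : y' ∈ ((ball (vertexCut G r v) (Sum.inl ⟨w, hwv⟩) r).deleteVerts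
          {Sum.inl ⟨w, hwv⟩}).verts),
        (pBallG (vertexCut G r v) r (Sum.inl ⟨w, hwv⟩)).Reachable ⟨x', hx2⟩ ⟨y', hy2⟩)) := by
  constructor
  · rintro ⟨hx2, hy2, hreach⟩
    classical
    by_cases hs : 1 ≤ r / 2
    · obtain ⟨P⟩ := hreach
      obtain ⟨q, hq, hwq⟩ := bw_of_pballWalk P
      exact mainLift hs hwv hx hy hx' hy' q.bypass q.bypass_isPath
        (hq.mono (q.support_bypass_subset) (q.edges_bypass_subset))
        (fun h => hwq (q.support_bypass_subset h))
    · exfalso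
      obtain ⟨⟨hre, hd⟩, hne⟩ := mem_pballVerts.mp hx2
      have h0 : G.dist w x = 0 := by omega
      exact hne ((SimpleGraph.Reachable.dist_eq_zero_iff hre).mp h0).symm
  · rintro ⟨hx2, hy2, hreach⟩
    have hpx := proj_copy hwv hx'
    have hpy := proj_copy hwv hy'
    subst hpx
    subst hpy
    exact projDown hwv hx2 hy2 hreach

end LocalSep
end
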